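/- Let X be an NPC space and let g be a hyperbolic isometry of X with attracting point ξ₁ = ξ₊(g). Let ξ₂ ∈ ∂X be opposite ξ₁. Then g stabilizes ξ₂ if and only if ξ₂ = ξ₋(g). Consequently, if G is a group acting on X by isometries, ξ₁ is the attracting point of some hyperbolic element of G, and ξ₂ ∈ ∂X is opposite ξ₁, then every hyperbolic element of G with attracting point ξ₁ has repelling point ξ₂ if and only if G_{ξ₁} ≤ G_{ξ₂}. -/

import Mathlib

open Filter Set Topology Pointwise MeasureTheory

section MetricDefs

variable {X : Type*} [MetricSpace X]

/-- `γ` restricted to `s` is a unit-speed geodesic (isometric embedding of `s ⊆ ℝ`). -/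
def IsGeodesicOn (γ : ℝ → X) (s : Set ℝ) : Prop :=
  ∀ u ∈ s, ∀ v ∈ s, dist (γ u) (γ v) = |u - v|

/-- A geodesic segment parametrized by arclength on `[a,b]`, from `x` to `y`. -/
def IsGeodesicSegment (γ : ℝ → X) (a b : ℝ) (x y : X) : Prop :=
  a ≤ b ∧ γ a = x ∧ γ b = y ∧ IsGeodesicOn γ (Set.Icc a b)

/-- A geodesic metric space: any two points are joined by a geodesic. -/
def GeodesicSpace (X : Type*) [MetricSpace X] : Prop :=
  ∀ x y : X, ∃ γ : ℝ → X, IsGeodesicSegment γ 0 (dist x y) x y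

/-- A geodesic ray (unit-speed on `[0,∞)`). -/
def IsGeodesicRay (γ : ℝ → X) : Prop := IsGeodesicOn γ (Set.Ici 0)

/-- A geodesic line (unit-speed on all of `ℝ`). -/
def IsGeodesicLine (γ : ℝ → X) : Prop := IsGeodesicOn γ Set.univ

/-- CAT(0) space, via the CN (Bruhat–Tits) inequality, equivalent to the CAT(0)
comparison-triangle inequality for geodesic spaces. -/
def CAT0 (X : Type*) [MetricSpace X] : Prop :=
  GeodesicSpace X ∧ ∀ x y z m : X, dist y m = dist y z / 2 → dist z m = dist y z / 2 →
    dist x m ^ 2 ≤ (dist x y ^ 2 + dist x z ^ 2) / 2 - dist y z ^ 2 / 4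

/-- All geodesic triangles are `δ`-thin: each point on one side lies within `δ` of the
union of the other two sides. -/
def SlimTriangles (X : Type*) [MetricSpace X] (δ : ℝ) : Prop :=
  ∀ (x y z : X) (γ₁ γ₂ γ₃ : ℝ → X),
    IsGeodesicSegment γ₁ 0 (dist x y) x y →
    IsGeodesicSegment γ₂ 0 (dist y z) y z →
    IsGeodesicSegment γ₃ 0 (dist z x) z x →
    ∀ s ∈ Set.Icc (0:ℝ) (dist x y),
      ∃ p ∈ γ₂ '' Set.Icc (0:ℝ) (dist y z) ∪ γ₃ '' Set.Icc (0:ℝ) (dist z x),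
        dist (γ₁ s) p ≤ δ

/-- Gromov `δ`-hyperbolic (δ-thin geodesic triangles). -/
def GromovHyperbolic (X : Type*) [MetricSpace X] (δ : ℝ) : Prop :=
  0 ≤ δ ∧ SlimTriangles X δ

/-- An NPC space: a geodesic space that is either complete CAT(0), or proper and
Gromov-hyperbolic. -/
def NPCSpace (X : Type*) [MetricSpace X] : Prop :=
  GeodesicSpace X ∧
    ((CompleteSpace X ∧ CAT0 X) ∨ (ProperSpace X ∧ ∃ δ : ℝ, GromovHyperbolic X δ))

/-- Uniquely geodesic space. -/
def UniquelyGeodesic (X : Type*) [MetricSpace X] : Prop :=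
  ∀ (x y : X) (γ₁ γ₂ : ℝ → X), IsGeodesicSegment γ₁ 0 (dist x y) x y →
    IsGeodesicSegment γ₂ 0 (dist x y) x y → ∀ t ∈ Set.Icc (0:ℝ) (dist x y), γ₁ t = γ₂ t

/-- Two rays are asymptotic: they stay at bounded distance. -/
def AsympRays (γ₁ γ₂ : ℝ → X) : Prop :=
  ∃ C : ℝ, ∀ t : ℝ, 0 ≤ t → dist (γ₁ t) (γ₂ t) ≤ C

/-- The boundary points of the rays `γ₁, γ₂` are opposite: some geodesic line has
`γ₁`'s class as backward endpoint and `γ₂`'s class as forward endpoint. -/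
def OppositeEnds (γ₁ γ₂ : ℝ → X) : Prop :=
  ∃ L : ℝ → X, IsGeodesicLine L ∧ AsympRays (fun t => L (-t)) γ₁ ∧ AsympRays L γ₂

/-- The sequence `x` converges to the boundary point represented by the ray `γ`:
it goes to infinity and geodesic segments from `γ 0` to `x n` eventually fellow-travel
`γ` within a uniform bound (this is convergence in the cone topology for CAT(0) spaces,
and Gromov convergence for hyperbolic spaces). -/
def ConvergesToEnd (x : ℕ → X) (γ : ℝ → X) : Prop :=
  Tendsto (fun n => dist (γ 0) (x n)) atTop atTop ∧
  ∃ C : ℝ, ∀ t : ℝ, 0 ≤ t → ∀ σ : ℕ → ℝ → X,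
    (∀ n, IsGeodesicSegment (σ n) 0 (dist (γ 0) (x n)) (γ 0) (x n)) →
    ∀ᶠ n in atTop, dist (σ n t) (γ t) ≤ C

/-- Geodesically convex subset. -/
def GeodesicallyConvex (Y : Set X) : Prop :=
  ∀ x ∈ Y, ∀ y ∈ Y, ∀ γ : ℝ → X, IsGeodesicSegment γ 0 (dist x y) x y →
    ∀ t ∈ Set.Icc (0:ℝ) (dist x y), γ t ∈ Y

/-- `Z` is an absorbing set for the boundary point of the ray `ρ` within `Y`. -/
def IsAbsorbing (Y Z : Set X) (ρ : ℝ → X) : Prop :=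
  ∃ r : ℝ → ℝ, Tendsto r atTop atTop ∧
    ∀ᶠ t in atTop, ∀ y ∈ Y, dist (ρ t) y ≤ r t → y ∈ Z

/-- The path (induced length) pseudo-distance inside a subset `T` of `X`. -/
noncomputable def pathDist (T : Set X) (x y : X) : ENNReal :=
  ⨅ (f : ℝ → X) (_ : ContinuousOn f (Set.Icc 0 1)) (_ : Set.MapsTo f (Set.Icc 0 1) T)
    (_ : f 0 = x) (_ : f 1 = y), eVariationOn f (Set.Icc 0 1)

end MetricDefs

section ActionDefs

variable {X : Type*} [MetricSpace X] {G : Type*} [Group G] [MulAction G X]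

/-- `G` acts on `X` by isometries. -/
def IsometricAction (G X : Type*) [Group G] [MetricSpace X] [MulAction G X] : Prop :=
  ∀ g : G, Isometry fun x : X => g • x

/-- The action of `G` on `X` is (metrically) proper. -/
def ProperAction (G X : Type*) [Group G] [TopologicalSpace G] [MetricSpace X]
    [MulAction G X] : Prop :=
  ∀ (x : X) (r : ℝ), IsCompact {g : G | dist (g • x) x ≤ r}

/-- The action of `G` on `X` is locally discrete: around each point, some ball of
positive radius has open pointwise fixator. -/
def BoundedElt (X : Type*) [MetricSpace X] {G : Type*} [Group G] [MulAction G X]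
    (g : G) : Prop :=
  ∀ x : X, Bornology.IsBounded (Set.range fun n : ℤ => g ^ n • x)

/-- The ray `γ` represents the attracting point of `g`: all forward orbits of `g`
converge to the corresponding boundary point. -/
def AttractsTo (g : G) (γ : ℝ → X) : Prop :=
  IsGeodesicRay γ ∧ ∀ x : X, ConvergesToEnd (fun n => g ^ n • x) γ

/-- `γ` is a (labelled) axis of `g`: `g` translates along the geodesic line `γ`. -/
def IsAxialWith (g : G) (γ : ℝ → X) : Prop :=
  IsGeodesicLine γ ∧ ∃ k : ℝ, 0 < k ∧ ∀ t : ℝ, g • γ t = γ (t + k)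

/-- `g` is an axial isometry of `X`. -/
def IsAxial (X : Type*) [MetricSpace X] {G : Type*} [Group G] [MulAction G X]
    (g : G) : Prop :=
  ∃ γ : ℝ → X, IsAxialWith g γ

/-- `n ↦ gⁿ • x` is a quasi-isometric embedding of `ℤ` into `X`. -/
def QIHyperbolic (X : Type*) [MetricSpace X] {G : Type*} [Group G] [MulAction G X]
    (g : G) : Prop :=
  ∃ (x : X) (a b : ℝ), 0 < a ∧ 0 ≤ b ∧ ∀ m n : ℤ,
    a⁻¹ * |(m : ℝ) - (n : ℝ)| - b ≤ dist (g ^ m • x) (g ^ n • x) ∧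
    dist (g ^ m • x) (g ^ n • x) ≤ a * |(m : ℝ) - (n : ℝ)| + b

/-- `g` acts as a hyperbolic isometry of the NPC space `X`: axial in the complete CAT(0)
case, QI-hyperbolic in the proper Gromov-hyperbolic case. -/
def IsHyperbolicIsom (X : Type*) [MetricSpace X] {G : Type*} [Group G] [MulAction G X]
    (g : G) : Prop :=
  (CompleteSpace X ∧ CAT0 X ∧ IsAxial X g) ∨
  (ProperSpace X ∧ (∃ δ : ℝ, GromovHyperbolic X δ) ∧ QIHyperbolic X g)

/-- Translation length of `g` on `X` (the limit of `d(x, gⁿx)/n`, realized as an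
infimum by subadditivity). -/
noncomputable def translationLength (X : Type*) [MetricSpace X] {G : Type*} [Group G]
    [MulAction G X] (g : G) : ℝ :=
  sInf {r : ℝ | ∃ (x : X) (n : ℕ), 0 < n ∧ r = dist x (g ^ n • x) / n}

/-- The stabilizer in `G` of the boundary point represented by the ray `γ`. -/
def endStabilizer (hiso : IsometricAction G X) (γ : ℝ → X) : Subgroup G where
  carrier := {g : G | AsympRays (fun t => g • γ t) γ}
  one_mem' := ⟨0, fun t _ => by simp⟩
  mul_mem' := by
    rintro a b ⟨Ca, hCa⟩ ⟨Cb, hCb⟩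
    refine ⟨Cb + Ca, fun t ht => ?_⟩
    have h1 : dist ((a * b) • γ t) (a • γ t) = dist (b • γ t) (γ t) := by
      rw [mul_smul]
      exact (hiso a).dist_eq _ _
    calc dist ((a * b) • γ t) (γ t)
        ≤ dist ((a * b) • γ t) (a • γ t) + dist (a • γ t) (γ t) := dist_triangle _ _ _
      _ ≤ Cb + Ca := add_le_add (h1 ▸ hCb t ht) (hCa t ht)
  inv_mem' := by
    rintro a ⟨Ca, hCa⟩
    refine ⟨Ca, fun t ht => ?_⟩
    have h1 : dist (a⁻¹ • γ t) (γ t) = dist (γ t) (a • γ t) := by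
      have := (hiso a).dist_eq (a⁻¹ • γ t) (γ t)
      simp only [smul_inv_smul] at this
      exact this.symm
    rw [h1, dist_comm]
    exact hCa t ht

/-- The setwise stabilizer of `Y ⊆ X` in `G`. -/
def setStabilizer (G : Type*) {X : Type*} [Group G] [MulAction G X] (Y : Set X) :
    Subgroup G where
  carrier := {g : G | ∀ y : X, y ∈ Y ↔ g • y ∈ Y}
  one_mem' := fun y => by simp
  mul_mem' := by
    intro a b ha hb y
    rw [mul_smul]
    exact (hb y).trans (ha (b • y))
  inv_mem' := by
    intro a ha y
    have := ha (a⁻¹ • y)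
    rw [smul_inv_smul] at this
    exact this.symm

/-- The pointwise fixator of `Y ⊆ X` in `G`. -/
def fixator (G : Type*) {X : Type*} [Group G] [MulAction G X] (Y : Set X) :
    Subgroup G where
  carrier := {g : G | ∀ y ∈ Y, g • y = y}
  one_mem' := fun y _ => one_smul _ y
  mul_mem' := by
    intro a b ha hb y hy
    rw [mul_smul, hb y hy, ha y hy]
  inv_mem' := by
    intro a ha y hy
    conv_lhs => rw [← ha y hy]
    rw [inv_smul_smul]

/-- The set of common fixed points in `X` of a set of group elements. -/
def fixedSet (X : Type*) {G : Type*} [Group G] [MulAction G X] (S : Set G) : Set X :=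
  {x : X | ∀ g ∈ S, g • x = x}

/-- The action is locally discrete: around each point there is a ball of positive
radius whose fixator is open. -/
def LocallyDiscreteAction (G X : Type*) [Group G] [TopologicalSpace G] [MetricSpace X]
    [MulAction G X] : Prop :=
  ∀ x : X, ∃ r : ℝ, 0 < r ∧ IsOpen ((fixator G (Metric.closedBall x r) : Set G))

end ActionDefs

section GroupDefs

variable {G : Type*} [Group G]

/-- The parabolic set of `g`: elements with relatively compact forward `g`-conjugation
orbit. -/
def parSet [TopologicalSpace G] (g : G) : Set G :=
  {x : G | IsCompact (closure (Set.range fun n : ℕ => g ^ n * x * (g ^ n)⁻¹))}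

/-- The contraction set of `g` modulo the subgroup `K`: elements whose forward
`g`-conjugation orbit converges to the trivial coset in `G ⧸ K`. -/
def conSet [TopologicalSpace G] (g : G) (K : Subgroup G) : Set G :=
  {x : G | Tendsto (fun n : ℕ => ((g ^ n * x * (g ^ n)⁻¹ : G) : G ⧸ K)) atTop
    (𝓝 ((1 : G) : G ⧸ K))}

/-- A compact open subgroup. -/
def CompactOpen [TopologicalSpace G] (U : Subgroup G) : Prop :=
  IsCompact (U : Set G) ∧ IsOpen (U : Set G)

/-- The displacement index `|gUg⁻¹ : U ∩ gUg⁻¹|`. -/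
noncomputable def scaleIndex (g : G) (U : Subgroup G) : ℕ :=
  U.relIndex (U.map (MulAut.conj g).toMonoidHom)

/-- The scale of `g`: minimum of `|gUg⁻¹ : U ∩ gUg⁻¹|` over compact open subgroups. -/
noncomputable def scale [TopologicalSpace G] (g : G) : ℕ :=
  sInf {n : ℕ | ∃ U : Subgroup G, CompactOpen U ∧ scaleIndex g U = n}

/-- `U` is a minimizing (tidy) compact open subgroup for `g`. -/
def IsMinimizing [TopologicalSpace G] (g : G) (U : Subgroup G) : Prop :=
  CompactOpen U ∧ scaleIndex g U = scale g

/-- For a t.d.l.c. group, the modular function satisfies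
`Δ(g) = |gUg⁻¹ : U ∩ gUg⁻¹| / |U : U ∩ gUg⁻¹|` for every compact open subgroup `U`.
`ModularEq g s` says that `Δ(g) = s`. -/
def ModularEq [TopologicalSpace G] (g : G) (s : ℕ) : Prop :=
  ∀ U : Subgroup G, CompactOpen U → scaleIndex g U = s * scaleIndex g⁻¹ U

/-- `U₊ = ⋂_{n ≥ 0} gⁿ U g⁻ⁿ`. -/
def Uplus (g : G) (U : Subgroup G) : Subgroup G :=
  ⨅ n : ℕ, U.map (MulAut.conj (g ^ n)).toMonoidHom

/-- `U₋ = ⋂_{n ≤ 0} gⁿ U g⁻ⁿ`. -/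
def Uminus (g : G) (U : Subgroup G) : Subgroup G :=
  ⨅ n : ℕ, U.map (MulAut.conj ((g ^ n)⁻¹)).toMonoidHom

/-- `U` is tidy for `g` (conditions TA and TB of Willis). -/
def TidyFor [TopologicalSpace G] (g : G) (U : Subgroup G) : Prop :=
  CompactOpen U ∧
  (U : Set G) = (Uplus g U : Set G) * (Uminus g U : Set G) ∧
  IsClosed (⋃ n : ℕ, (fun h : G => g ^ n * h * (g ^ n)⁻¹) '' (Uplus g U : Set G))

/-- The nub of `g`: intersection of all minimizing (tidy) subgroups for `g`. -/
noncomputable def nub [TopologicalSpace G] (g : G) : Subgroup G :=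
  ⨅ (U : Subgroup G) (_ : IsMinimizing g U), U

/-- The scale of an automorphism `α`: minimum of `|α(U) : α(U) ∩ U|` over compact open
subgroups. -/
noncomputable def scaleAut [TopologicalSpace G] (α : G ≃* G) : ℕ :=
  sInf {n : ℕ | ∃ U : Subgroup G, CompactOpen U ∧ U.relIndex (U.map α.toMonoidHom) = n}

end GroupDefs

section TreeDefs

variable {X : Type*} [MetricSpace X]

/-- `x ≤_T y`: some geodesic ray from `x` to the end of `ρ` contained in `T` passes
through `y`. -/
def leTree (T : Set X) (ρ : ℝ → X) (x y : X) : Prop :=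
  ∃ γ : ℝ → X, IsGeodesicRay γ ∧ γ 0 = x ∧ AsympRays γ ρ ∧ γ '' Set.Ici (0:ℝ) ⊆ T ∧
    ∃ t : ℝ, 0 ≤ t ∧ γ t = y

/-- The branching function of the tree `T` (with distinguished end given by `ρ`)
based at `x₀`. -/
noncomputable def branching (T : Set X) (ρ : ℝ → X) (x₀ : X) (m : ℝ) : ℕ :=
  if 0 < m then
    Nat.card {y : X | leTree T ρ y x₀ ∧ pathDist T x₀ y = ENNReal.ofReal m}
  else 1

end TreeDefs

section Helpers

variable {X : Type*} [MetricSpace X]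

lemma seg_le {γ : ℝ → X} {d : ℝ} {p q : X} (h : IsGeodesicSegment γ 0 d p q) : (0:ℝ) ≤ d := h.1

lemma seg_zero {γ : ℝ → X} {d : ℝ} {p q : X} (h : IsGeodesicSegment γ 0 d p q) : γ 0 = p := h.2.1

lemma seg_end {γ : ℝ → X} {d : ℝ} {p q : X} (h : IsGeodesicSegment γ 0 d p q) : γ d = q := h.2.2.1

lemma seg_dist {γ : ℝ → X} {d : ℝ} {p q : X} (h : IsGeodesicSegment γ 0 d p q)
    {u v : ℝ} (hu0 : 0 ≤ u) (hud : u ≤ d) (hv0 : 0 ≤ v) (hvd : v ≤ d) :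
    dist (γ u) (γ v) = |u - v| := h.2.2.2 u ⟨hu0, hud⟩ v ⟨hv0, hvd⟩

lemma seg_dist_left {γ : ℝ → X} {d : ℝ} {p q : X} (h : IsGeodesicSegment γ 0 d p q)
    {u : ℝ} (hu0 : 0 ≤ u) (hud : u ≤ d) : dist p (γ u) = u := by
  have := seg_dist h hu0 hud le_rfl (seg_le h)
  rw [seg_zero h] at this
  rw [dist_comm, this, sub_zero, abs_of_nonneg hu0]

lemma seg_dist_right {γ : ℝ → X} {d : ℝ} {p q : X} (h : IsGeodesicSegment γ 0 d p q)
    {u : ℝ} (hu0 : 0 ≤ u) (hud : u ≤ d) : dist (γ u) q = d - u := by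
  have := seg_dist h hu0 hud (seg_le h) le_rfl
  rw [seg_end h] at this
  rw [this, abs_of_nonpos (by linarith), neg_sub]

lemma line_dist {L : ℝ → X} (hL : IsGeodesicLine L) (u v : ℝ) :
    dist (L u) (L v) = |u - v| := hL u trivial v trivial

lemma ray_dist {γ : ℝ → X} (h : IsGeodesicRay γ) {u v : ℝ} (hu : 0 ≤ u) (hv : 0 ≤ v) :
    dist (γ u) (γ v) = |u - v| := h u hu v hv

lemma line_seg {L : ℝ → X} (hL : IsGeodesicLine L) {a b : ℝ} (hab : a ≤ b) :
    IsGeodesicSegment (fun s => L (s + a)) 0 (dist (L a) (L b)) (L a) (L b) := by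
  have hd : dist (L a) (L b) = b - a := by
    rw [line_dist hL, abs_of_nonpos (by linarith), neg_sub]
  rw [hd]
  refine ⟨by linarith, by simp, by simp, ?_⟩
  intro u _ v _
  simpa using line_dist hL (u + a) (v + a)

lemma ray_seg {γ : ℝ → X} (h : IsGeodesicRay γ) {T : ℝ} (hT : 0 ≤ T) :
    IsGeodesicSegment γ 0 (dist (γ 0) (γ T)) (γ 0) (γ T) := by
  have hd : dist (γ 0) (γ T) = T := by
    rw [ray_dist h le_rfl hT, abs_of_nonpos (by linarith), neg_sub, sub_zero]
  rw [hd]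
  exact ⟨hT, rfl, rfl, fun u hu v hv => h u hu.1 v hv.1⟩

lemma line_ray {L : ℝ → X} (hL : IsGeodesicLine L) : IsGeodesicRay L :=
  fun u _ v _ => line_dist hL u v

lemma line_ray_neg {L : ℝ → X} (hL : IsGeodesicLine L) : IsGeodesicRay (fun t => L (-t)) := by
  intro u hu v hv
  rw [line_dist hL]
  rw [show -u - -v = -(u - v) by ring, abs_neg]

lemma exists_geodesic_family (hgeo : GeodesicSpace X) (p : X) (x : ℕ → X) :
    ∃ σ : ℕ → ℝ → X, ∀ n, IsGeodesicSegment (σ n) 0 (dist p (x n)) p (x n) := by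
  choose σ hσ using fun n => hgeo p (x n)
  exact ⟨σ, hσ⟩

variable {G : Type*} [Group G] [MulAction G X]

lemma iso_dist (hiso : IsometricAction G X) (g : G) (x y : X) :
    dist (g • x) (g • y) = dist x y := (hiso g).dist_eq x y

lemma iso_dist_inv (hiso : IsometricAction G X) (g : G) (x y : X) :
    dist (g⁻¹ • x) y = dist x (g • y) := by
  rw [← iso_dist hiso g (g⁻¹ • x) y, smul_inv_smul]

lemma geodesicOn_smul (hiso : IsometricAction G X) (g : G) {γ : ℝ → X} {s : Set ℝ}
    (h : IsGeodesicOn γ s) : IsGeodesicOn (fun t => g • γ t) s := by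
  intro u hu v hv
  rw [iso_dist hiso]
  exact h u hu v hv

lemma seg_smul (hiso : IsometricAction G X) (g : G) {γ : ℝ → X} {d : ℝ} {p q : X}
    (h : IsGeodesicSegment γ 0 d p q) :
    IsGeodesicSegment (fun t => g • γ t) 0 d (g • p) (g • q) :=
  ⟨h.1, by simp only []; rw [h.2.1], by simp only []; rw [h.2.2.1], geodesicOn_smul hiso g h.2.2.2⟩

lemma line_smul (hiso : IsometricAction G X) (g : G) {L : ℝ → X}
    (h : IsGeodesicLine L) : IsGeodesicLine (fun t => g • L t) := geodesicOn_smul hiso g h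

lemma ray_smul (hiso : IsometricAction G X) (g : G) {γ : ℝ → X}
    (h : IsGeodesicRay γ) : IsGeodesicRay (fun t => g • γ t) := geodesicOn_smul hiso g h

end Helpers

section RealLemmas

lemma phi_decreasing (φ : ℝ → ℝ) (M : ℝ) (hb : ∀ t, φ t ≤ M)
    (hmc : ∀ t s : ℝ, 0 ≤ s → φ t ≤ (φ (t - s) + φ (t + s))/2) :
    ∀ t s : ℝ, 0 ≤ s → φ t ≤ φ (t - s) := by
  intro t s hs
  by_contra hlt
  push_neg at hlt
  set ε := φ t - φ (t - s) with hε
  have hε0 : 0 < ε := by simp only [hε]; linarith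
  have step : ∀ m : ℕ, φ (t + m*s) - φ (t + m*s - s) ≥ ε ∧ φ (t + m*s) ≥ φ t + m*ε := by
    intro m
    induction m with
    | zero => constructor <;> simp [hε]
    | succ m ih =>
      have h2 := hmc (t + m*s) s hs
      have key : φ (t + m*s + s) - φ (t + m*s) ≥ ε := by linarith [ih.1]
      have e1 : t + ((m:ℕ)+1:ℝ)*s - s = t + m*s := by push_cast; ring
      have e2 : t + ((m:ℕ)+1:ℝ)*s = t + m*s + s := by push_cast; ring
      constructor
      · push_cast
        push_cast at e1 e2
        rw [e1, e2]
        linarith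
      · push_cast
        push_cast at e2
        rw [e2]
        have := ih.2
        nlinarith
  obtain ⟨m, hm⟩ := exists_nat_gt ((M - φ t)/ε)
  have h3 := (step m).2
  have h4 := hb (t + m*s)
  have h5 : (M - φ t)/ε < m := hm
  rw [div_lt_iff₀ hε0] at h5
  nlinarith

lemma sign_stabilize (t : ℕ → ℝ) (S : ℝ) (N : ℕ)
    (hstep : ∀ n, |t (n+1) - t n| ≤ S)
    (hbig : ∀ n, N ≤ n → S < |t n|) :
    (∀ n, N ≤ n → 0 < t n) ∨ (∀ n, N ≤ n → t n < 0) := by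
  have hS : 0 ≤ S := le_trans (abs_nonneg _) (hstep 0)
  have pos_step : ∀ n, N ≤ n → 0 < t n → 0 < t (n+1) := by
    intro n hn hpos
    by_contra hneg
    push_neg at hneg
    have h1 : S < t n := by have := hbig n hn; rwa [abs_of_pos hpos] at this
    have h2 := hstep n
    rw [abs_sub_comm] at h2
    have : t n - t (n+1) ≤ |t n - t (n+1)| := le_abs_self _
    linarith
  have neg_step : ∀ n, N ≤ n → t n < 0 → t (n+1) < 0 := by
    intro n hn hneg
    by_contra hpos
    push_neg at hpos
    have h1 : S < -(t n) := by have := hbig n hn; rwa [abs_of_neg hneg] at this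
    have h2 := hstep n
    have : t (n+1) - t n ≤ |t (n+1) - t n| := le_abs_self _
    linarith
  rcases lt_trichotomy (t N) 0 with h | h | h
  · right
    intro n hn
    induction n, hn using Nat.le_induction with
    | base => exact h
    | succ n hn ih => exact neg_step n hn ih
  · exfalso; have := hbig N le_rfl; rw [h] at this; simp at this; linarith
  · left
    intro n hn
    induction n, hn using Nat.le_induction with
    | base => exact h
    | succ n hn ih => exact pos_step n hn ih

lemma reach_lemma (r : ℕ → ℝ) (S : ℝ) (hS : 0 ≤ S) (N : ℕ) (target : ℝ)
    (hstep : ∀ n, |r (n+1) - r n| ≤ S)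
    (h0 : r N ≤ target) (hi : ∃ m, N ≤ m ∧ target ≤ r m) :
    ∃ m, N ≤ m ∧ |r m - target| ≤ S := by
  classical
  obtain ⟨m0, hm0N, hm0⟩ := hi
  have hPex : ∃ j : ℕ, target ≤ r (N + j) := ⟨m0 - N, by rwa [Nat.add_sub_cancel' hm0N]⟩
  set j0 := Nat.find hPex with hj0
  have hP0 : target ≤ r (N + j0) := Nat.find_spec hPex
  rcases Nat.eq_zero_or_pos j0 with h | h
  · refine ⟨N, le_rfl, ?_⟩
    rw [h, Nat.add_zero] at hP0
    rw [abs_of_nonpos (by linarith)]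
    linarith
  · obtain ⟨j, hj⟩ := Nat.exists_eq_succ_of_ne_zero (Nat.pos_iff_ne_zero.mp h)
    have hnot : ¬ target ≤ r (N + j) := by
      have := Nat.find_min hPex (m := j) (by omega)
      exact this
    push_neg at hnot
    refine ⟨N + j + 1, by omega, ?_⟩
    have h2 := hstep (N + j)
    have h3 : r (N + j + 1) - r (N + j) ≤ S := le_trans (le_abs_self _) h2
    have hP0' : target ≤ r (N + j + 1) := by
      have : N + j0 = N + j + 1 := by omega
      rwa [this] at hP0
    rw [abs_of_nonneg (by linarith)]
    linarith

lemma dyadic_bound (g : ℝ → ℝ) (M Λ : ℝ) (hΛ : 0 ≤ Λ)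
    (h0 : g 0 ≤ M) (h1 : g 1 ≤ M)
    (hmc : ∀ s₁, 0 ≤ s₁ → s₁ ≤ 1 → ∀ s₂, 0 ≤ s₂ → s₂ ≤ 1 → g ((s₁+s₂)/2) ≤ (g s₁ + g s₂)/2)
    (hlip : ∀ s₁, 0 ≤ s₁ → s₁ ≤ 1 → ∀ s₂, 0 ≤ s₂ → s₂ ≤ 1 → |g s₁ - g s₂| ≤ Λ * |s₁ - s₂|) :
    ∀ s, 0 ≤ s → s ≤ 1 → g s ≤ M := by
  have key : ∀ m : ℕ, ∀ k : ℕ, k ≤ 2^m → g ((k:ℝ)/2^m) ≤ M := by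
    intro m
    induction m with
    | zero =>
      intro k hk
      interval_cases k
      · simpa using h0
      · simpa using h1
    | succ m ih =>
      intro k hk
      rcases Nat.even_or_odd k with ⟨j, hj⟩ | ⟨j, hj⟩
      · subst hj
        have hjle : j ≤ 2^m := by
          have : 2^(m+1) = 2*2^m := by ring
          omega
        have e : ((j+j:ℕ):ℝ)/2^(m+1) = (j:ℝ)/2^m := by
          push_cast
          rw [pow_succ]
          field_simp
          ring
        rw [e]
        exact ih j hjle
      · subst hj
        have hjle : j + 1 ≤ 2^m := by
          have : 2^(m+1) = 2*2^m := by ring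
          omega
        have e : ((2*j+1:ℕ):ℝ)/2^(m+1) = ((j:ℝ)/2^m + ((j+1:ℕ):ℝ)/2^m)/2 := by
          push_cast
          rw [pow_succ]
          field_simp
          ring
        rw [e]
        have b1 : (0:ℝ) ≤ (j:ℝ)/2^m := by positivity
        have b2 : (j:ℝ)/2^m ≤ 1 := by
          rw [div_le_one (by positivity)]
          exact_mod_cast le_trans (Nat.le_succ j) hjle
        have b3 : (0:ℝ) ≤ ((j+1:ℕ):ℝ)/2^m := by positivity
        have b4 : ((j+1:ℕ):ℝ)/2^m ≤ 1 := by
          rw [div_le_one (by positivity)]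
          exact_mod_cast hjle
        have := hmc _ b1 b2 _ b3 b4
        have hgj := ih j (le_trans (Nat.le_succ j) hjle)
        have hgj1 := ih (j+1) hjle
        linarith
  intro s hs0 hs1
  by_contra hlt
  push_neg at hlt
  obtain ⟨m, hm⟩ := pow_unbounded_of_one_lt (Λ/(g s - M)) (one_lt_two (α := ℝ))
  have h2m : (0:ℝ) < 2^m := by positivity
  have hΛm : Λ/2^m < g s - M := by
    rw [div_lt_iff₀ h2m]
    rw [div_lt_iff₀ (by linarith)] at hm
    nlinarith
  set k := ⌊s * 2^m⌋₊ with hk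
  have hk2 : (k:ℝ) ≤ s * 2^m := Nat.floor_le (by positivity)
  have hk3 : s * 2^m < k + 1 := Nat.lt_floor_add_one _
  have hkle : k ≤ 2^m := by
    have h4 : (k:ℝ) ≤ 2^m := le_trans hk2 (by nlinarith)
    exact_mod_cast h4
  have hb1 : (0:ℝ) ≤ (k:ℝ)/2^m := by positivity
  have hb2 : (k:ℝ)/2^m ≤ 1 := by
    rw [div_le_one h2m]
    exact_mod_cast hkle
  have habs : |s - (k:ℝ)/2^m| ≤ 1/2^m := by
    rw [abs_le]
    have hle1 : s ≤ ((k:ℝ)+1)/2^m := by rw [le_div_iff₀ h2m]; linarith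
    have hle2 : (k:ℝ)/2^m ≤ s := by rw [div_le_iff₀ h2m]; linarith
    have hsplit : ((k:ℝ)+1)/2^m = (k:ℝ)/2^m + 1/2^m := by ring
    constructor <;> linarith
  have := hlip s hs0 hs1 _ hb1 hb2
  have hgk := key m k hkle
  have hmono : Λ * |s - (k:ℝ)/2^m| ≤ Λ * (1/2^m) := by
    apply mul_le_mul_of_nonneg_left habs hΛ
  have : g s - g ((k:ℝ)/2^m) ≤ Λ/2^m := by
    have h5 : g s - g ((k:ℝ)/2^m) ≤ |g s - g ((k:ℝ)/2^m)| := le_abs_self _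
    calc g s - g ((k:ℝ)/2^m) ≤ Λ * (1/2^m) := by linarith
    _ = Λ/2^m := by ring
  linarith

end RealLemmas

section CATTools

variable {X : Type*} [MetricSpace X]

/-- `m` is a metric midpoint of `x` and `y`. -/
def IsMidpt (x y m : X) : Prop := dist x m = dist x y / 2 ∧ dist y m = dist x y / 2

lemma midpt_exists (hgeo : GeodesicSpace X) (x y : X) : ∃ m, IsMidpt x y m := by
  obtain ⟨γ, hγ⟩ := hgeo x y
  have hd : (0:ℝ) ≤ dist x y := dist_nonneg
  refine ⟨γ (dist x y / 2), ?_, ?_⟩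
  · rw [seg_dist_left hγ (by linarith) (by linarith)]
  · rw [dist_comm, seg_dist_right hγ (by linarith) (by linarith)]
    ring

lemma midpt_unique (hcat : CAT0 X) {x y m m' : X} (h : IsMidpt x y m) (h' : IsMidpt x y m') :
    m = m' := by
  have hcn := hcat.2 m' x y m h.1 h.2
  have e1 : dist m' x = dist x y / 2 := by rw [dist_comm]; exact h'.1
  have e2 : dist m' y = dist x y / 2 := by rw [dist_comm]; exact h'.2
  rw [e1, e2] at hcn
  have : dist m' m ^ 2 ≤ 0 := by nlinarith
  have h0 : dist m' m = 0 := by nlinarith [dist_nonneg (x := m') (y := m)]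
  exact (dist_eq_zero.mp h0).symm

lemma midpt_comm {x y m : X} (h : IsMidpt x y m) : IsMidpt y x m :=
  ⟨by rw [h.2, dist_comm], by rw [h.1, dist_comm]⟩

lemma midpt_contract (hcat : CAT0 X) {x y y' q q' : X}
    (hq : IsMidpt x y q) (hq' : IsMidpt x y' q') : dist q q' ≤ dist y y' / 2 := by
  have h1 := hcat.2 y' x y q hq.1 hq.2
  have h2 := hcat.2 q x y' q' hq'.1 hq'.2
  have e1 : dist q x = dist x y / 2 := by rw [dist_comm]; exact hq.1
  have e2 : dist y' q = dist q y' := dist_comm _ _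
  have e3 : dist y' x = dist x y' := dist_comm _ _
  have e4 : dist y' y = dist y y' := dist_comm _ _
  rw [e2, e3, e4] at h1
  rw [e1] at h2
  have hsq : dist q q' ^ 2 ≤ (dist y y' / 2) ^ 2 := by nlinarith
  nlinarith [dist_nonneg (x := q) (y := q'), dist_nonneg (x := y) (y := y')]

lemma midpt_contract2 (hcat : CAT0 X) {x y x' y' m m' : X}
    (hm : IsMidpt x y m) (hm' : IsMidpt x' y' m') :
    dist m m' ≤ (dist x x' + dist y y')/2 := by
  obtain ⟨n, hn⟩ := midpt_exists hcat.1 x' y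
  have h1 : dist m n ≤ dist x x' / 2 :=
    midpt_contract hcat (midpt_comm hm) (midpt_comm hn)
  have h2 : dist n m' ≤ dist y y' / 2 := midpt_contract hcat hn hm'
  calc dist m m' ≤ dist m n + dist n m' := dist_triangle _ _ _
  _ ≤ (dist x x' + dist y y')/2 := by linarith

lemma geo_midpt {γ : ℝ → X} {s : Set ℝ} (h : IsGeodesicOn γ s) {u v : ℝ}
    (hu : u ∈ s) (hv : v ∈ s) (hm : (u+v)/2 ∈ s) :
    IsMidpt (γ u) (γ v) (γ ((u+v)/2)) := by
  constructor
  · rw [h u hu _ hm, h u hu v hv]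
    rw [show u - (u+v)/2 = (u-v)/2 by ring]
    rw [abs_div]
    norm_num
  · rw [h v hv _ hm, h u hu v hv]
    rw [show v - (u+v)/2 = -((u-v)/2) by ring, abs_neg]
    rw [abs_div]
    norm_num

end CATTools

section FT

variable {X : Type*} [MetricSpace X]

/-- Uniform fellow-travelling of geodesic segments with nearby endpoints. -/
def FTprop (X : Type*) [MetricSpace X] (K : ℝ) : Prop :=
  ∀ (p q p' q' : X) (σ σ' : ℝ → X), IsGeodesicSegment σ 0 (dist p q) p q →
    IsGeodesicSegment σ' 0 (dist p' q') p' q' →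
    ∀ t, 0 ≤ t → t ≤ dist p q → t ≤ dist p' q' →
      dist (σ t) (σ' t) ≤ 4 * dist p p' + 4 * dist q q' + K

lemma dist_dist4 (a b a' b' : X) : |dist a b - dist a' b'| ≤ dist a a' + dist b b' := by
  have h1 := abs_dist_sub_le a a' b
  have h2 := abs_dist_sub_le b b' a'
  have h3 : |dist a b - dist a' b'| ≤ |dist a b - dist a' b| + |dist a' b - dist a' b'| := by
    have := abs_sub_abs_le_abs_sub (dist a b - dist a' b') 0
    calc |dist a b - dist a' b'|
        = |(dist a b - dist a' b) + (dist a' b - dist a' b')| := by ring_nf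
      _ ≤ |dist a b - dist a' b| + |dist a' b - dist a' b'| := abs_add_le _ _
  have h4 : |dist a' b - dist a' b'| = |dist b a' - dist b' a'| := by
    rw [dist_comm a' b, dist_comm a' b']
  rw [h4] at h3
  linarith

lemma ft_cat (hcat : CAT0 X) : FTprop X 0 := by
  intro p q p' q' σ σ' hσ hσ' t ht0 ht1 ht2
  set d := dist p q with hd
  set d' := dist p' q' with hd'
  have hd0 : 0 ≤ d := dist_nonneg
  have hd'0 : 0 ≤ d' := dist_nonneg
  have hB0 : 0 ≤ dist p p' := dist_nonneg
  have hB1 : 0 ≤ dist q q' := dist_nonneg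
  rcases eq_or_lt_of_le (le_trans ht0 ht1 : (0:ℝ) ≤ d) with hzero | hpos
  · -- d = 0 so t = 0
    have ht : t = 0 := le_antisymm (hzero ▸ ht1) ht0
    subst ht
    rw [seg_zero hσ, seg_zero hσ']
    linarith
  -- main case
  have key : ∀ s, 0 ≤ s → s ≤ 1 →
      dist (σ (s*d)) (σ' (s*d')) ≤ max (dist p p') (dist q q') := by
    apply dyadic_bound (fun s => dist (σ (s*d)) (σ' (s*d'))) _ (d + d') (by linarith)
    · simp only [zero_mul]
      rw [seg_zero hσ, seg_zero hσ']
      exact le_max_left _ _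
    · simp only [one_mul]
      rw [seg_end hσ, seg_end hσ']
      exact le_max_right _ _
    · intro s₁ hs₁0 hs₁1 s₂ hs₂0 hs₂1
      have m1 : IsMidpt (σ (s₁*d)) (σ (s₂*d)) (σ (((s₁*d)+(s₂*d))/2)) := by
        apply geo_midpt hσ.2.2.2 ⟨by positivity, by nlinarith⟩ ⟨by positivity, by nlinarith⟩
        constructor
        · positivity
        · nlinarith
      have m2 : IsMidpt (σ' (s₁*d')) (σ' (s₂*d')) (σ' (((s₁*d')+(s₂*d'))/2)) := by
        apply geo_midpt hσ'.2.2.2 ⟨by positivity, by nlinarith⟩ ⟨by positivity, by nlinarith⟩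
        constructor
        · positivity
        · nlinarith
      have e1 : ((s₁+s₂)/2)*d = ((s₁*d)+(s₂*d))/2 := by ring
      have e2 : ((s₁+s₂)/2)*d' = ((s₁*d')+(s₂*d'))/2 := by ring
      rw [e1, e2]
      exact midpt_contract2 hcat m1 m2
    · intro s₁ hs₁0 hs₁1 s₂ hs₂0 hs₂1
      have l1 : dist (σ (s₁*d)) (σ (s₂*d)) = |s₁-s₂| * d := by
        rw [seg_dist hσ (by positivity) (by nlinarith) (by positivity) (by nlinarith)]
        rw [show s₁*d - s₂*d = (s₁-s₂)*d by ring, abs_mul, abs_of_nonneg hd0]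
      have l2 : dist (σ' (s₁*d')) (σ' (s₂*d')) = |s₁-s₂| * d' := by
        rw [seg_dist hσ' (by positivity) (by nlinarith) (by positivity) (by nlinarith)]
        rw [show s₁*d' - s₂*d' = (s₁-s₂)*d' by ring, abs_mul, abs_of_nonneg hd'0]
      have h5 := dist_dist4 (σ (s₁*d)) (σ' (s₁*d')) (σ (s₂*d)) (σ' (s₂*d'))
      rw [l1, l2] at h5
      have habs : 0 ≤ |s₁ - s₂| := abs_nonneg _
      calc |dist (σ (s₁*d)) (σ' (s₁*d')) - dist (σ (s₂*d)) (σ' (s₂*d'))|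
          ≤ |s₁-s₂| * d + |s₁-s₂| * d' := h5
        _ = (d + d') * |s₁ - s₂| := by ring
  -- apply at s = t/d
  have hs0 : 0 ≤ t/d := by positivity
  have hs1 : t/d ≤ 1 := by rw [div_le_one hpos]; exact ht1
  have h6 := key (t/d) hs0 hs1
  have e3 : (t/d)*d = t := by field_simp
  rw [e3] at h6
  have e4 : (t/d)*d' ≤ d' := by
    calc (t/d)*d' ≤ 1*d' := by apply mul_le_mul_of_nonneg_right hs1 hd'0
    _ = d' := one_mul _
  have e5 : 0 ≤ (t/d)*d' := by positivity
  have h7 : dist (σ' ((t/d)*d')) (σ' t) = |(t/d)*d' - t| := seg_dist hσ' e5 e4 ht0 ht2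
  have h8 : |(t/d)*d' - t| ≤ |d' - d| := by
    rw [show (t/d)*d' - t = (t/d)*(d' - d) by field_simp]
    rw [abs_mul, abs_of_nonneg hs0]
    calc (t/d)*|d' - d| ≤ 1*|d' - d| := by
          apply mul_le_mul_of_nonneg_right hs1 (abs_nonneg _)
    _ = |d' - d| := one_mul _
  have h9 : |d' - d| ≤ dist p p' + dist q q' := by
    have := dist_dist4 p' q' p q
    rw [← hd, ← hd'] at this
    calc |d' - d| ≤ dist p' p + dist q' q := this
    _ = dist p p' + dist q q' := by rw [dist_comm p' p, dist_comm q' q]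
  have hmax : max (dist p p') (dist q q') ≤ dist p p' + dist q q' := by
    apply max_le <;> linarith
  have h10 : dist (σ' ((t/d)*d')) (σ' t) ≤ dist p p' + dist q q' := by
    rw [h7]; linarith
  calc dist (σ t) (σ' t) ≤ dist (σ t) (σ' ((t/d)*d')) + dist (σ' ((t/d)*d')) (σ' t) :=
        dist_triangle _ _ _
    _ ≤ 4 * dist p p' + 4 * dist q q' + 0 := by linarith

end FT

section FTSlim

variable {X : Type*} [MetricSpace X]

lemma ft_slim {δ : ℝ} (hgeo : GeodesicSpace X) (hδ : 0 ≤ δ) (hslim : SlimTriangles X δ) :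
    FTprop X (8*δ) := by
  intro p q p' q' σ σ' hσ hσ' t ht0 htd htd'
  obtain ⟨γ₂, hγ₂⟩ := hgeo q q'
  obtain ⟨η, hη⟩ := hgeo q' p
  obtain ⟨θ, hθ⟩ := hgeo p p'
  have hB0 : (0:ℝ) ≤ dist p p' := dist_nonneg
  have hB1 : (0:ℝ) ≤ dist q q' := dist_nonneg
  have hdd' : |dist p q - dist p' q'| ≤ dist p p' + dist q q' := dist_dist4 _ _ _ _
  obtain ⟨P, hP, hPd⟩ := hslim p q q' σ γ₂ η hσ hγ₂ hη t ⟨ht0, htd⟩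
  have hσt : dist p (σ t) = t := seg_dist_left hσ ht0 htd
  have hσtr : dist (σ t) q = dist p q - t := seg_dist_right hσ ht0 htd
  have hσ't : dist p' (σ' t) = t := seg_dist_left hσ' ht0 htd'
  have hσ'tr : dist (σ' t) q' = dist p' q' - t := seg_dist_right hσ' ht0 htd'
  rcases hP with ⟨u, hu, rfl⟩ | ⟨v, hv, rfl⟩
  · -- P = γ₂ u : near the side [q,q']
    have h1 : dist q (γ₂ u) = u := seg_dist_left hγ₂ hu.1 hu.2
    have h2 : dist (σ t) q ≤ δ + dist q q' := by
      calc dist (σ t) q ≤ dist (σ t) (γ₂ u) + dist (γ₂ u) q := dist_triangle _ _ _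
      _ ≤ δ + dist q q' := by
          rw [dist_comm (γ₂ u) q, h1]
          have := hu.2
          linarith
    have h3 : dist (σ' t) q' ≤ dist p p' + 2 * dist q q' + δ := by
      rw [hσ'tr]
      have : dist p' q' - t ≤ |dist p q - dist p' q'| + (dist p q - t) := by
        cases abs_cases (dist p q - dist p' q') <;> linarith
      rw [hσtr] at h2
      linarith
    calc dist (σ t) (σ' t)
        ≤ dist (σ t) q + dist q q' + dist q' (σ' t) := dist_triangle4 _ _ _ _
      _ ≤ 4 * dist p p' + 4 * dist q q' + 8*δ := by
          rw [dist_comm q' (σ' t)]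
          rw [hσtr] at h2
          linarith
  · -- P = η v : near the side [q',p]; second triangle
    obtain ⟨Q, hQ, hQd⟩ := hslim q' p p' η θ σ' hη hθ hσ' v hv
    rcases hQ with ⟨w, hw, rfl⟩ | ⟨u, hu, rfl⟩
    · -- Q = θ w : near [p,p']
      have h1 : dist p (θ w) = w := seg_dist_left hθ hw.1 hw.2
      have h2 : t ≤ 2*δ + dist p p' := by
        rw [← hσt]
        calc dist p (σ t) ≤ dist p (θ w) + dist (θ w) (η v) + dist (η v) (σ t) :=
              dist_triangle4 _ _ _ _
        _ ≤ 2*δ + dist p p' := by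
            rw [h1, dist_comm (θ w) (η v), dist_comm (η v) (σ t)]
            have := hw.2
            linarith
      calc dist (σ t) (σ' t)
          ≤ dist (σ t) p + dist p p' + dist p' (σ' t) := dist_triangle4 _ _ _ _
        _ ≤ 4 * dist p p' + 4 * dist q q' + 8*δ := by
            rw [dist_comm (σ t) p, hσt, hσ't]
            linarith
    · -- Q = σ' u
      have h1 : dist p' (σ' u) = u := seg_dist_left hσ' hu.1 hu.2
      have h2 : dist (σ t) (σ' u) ≤ 2*δ := by
        calc dist (σ t) (σ' u) ≤ dist (σ t) (η v) + dist (η v) (σ' u) := dist_triangle _ _ _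
        _ ≤ 2*δ := by linarith
      have h3 : |u - t| ≤ dist p p' + 2*δ := by
        rw [← h1, ← hσt]
        calc |dist p' (σ' u) - dist p (σ t)|
            ≤ dist p' p + dist (σ' u) (σ t) := dist_dist4 _ _ _ _
          _ ≤ dist p p' + 2*δ := by
              rw [dist_comm p' p, dist_comm (σ' u) (σ t)]
              linarith
      have h4 : dist (σ' u) (σ' t) = |u - t| := seg_dist hσ' hu.1 hu.2 ht0 htd'
      calc dist (σ t) (σ' t) ≤ dist (σ t) (σ' u) + dist (σ' u) (σ' t) := dist_triangle _ _ _
        _ ≤ 4 * dist p p' + 4 * dist q q' + 8*δ := by rw [h4]; linarith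

lemma ft_of_NPC (hNPC : NPCSpace X) : ∃ K : ℝ, 0 ≤ K ∧ FTprop X K := by
  rcases hNPC.2 with ⟨_, hcat⟩ | ⟨_, δ, hδ, hslim⟩
  · exact ⟨0, le_rfl, ft_cat hcat⟩
  · exact ⟨8*δ, by linarith, ft_slim hNPC.1 hδ hslim⟩

end FTSlim

section CE

variable {X : Type*} [MetricSpace X] {G : Type*} [Group G] [MulAction G X]

lemma ray_dist0 {γ : ℝ → X} (hray : IsGeodesicRay γ) {u : ℝ} (hu : 0 ≤ u) :
    dist (γ 0) (γ u) = u := by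
  rw [ray_dist hray le_rfl hu, abs_of_nonpos (by linarith), neg_sub, sub_zero]

lemma CE_of_near_ray {K : ℝ} (hft : FTprop X K)
    {γ : ℝ → X} (hray : IsGeodesicRay γ) (y : ℕ → X) (t : ℕ → ℝ) (E : ℝ)
    (htop : Tendsto t atTop atTop)
    (hE : ∀ᶠ n in atTop, dist (y n) (γ (t n)) ≤ E) :
    ConvergesToEnd y γ := by
  have hten : Tendsto (fun n => dist (γ 0) (y n)) atTop atTop := by
    have h1 : ∀ᶠ n in atTop, t n - E ≤ dist (γ 0) (y n) := by
      filter_upwards [hE, htop.eventually_ge_atTop 0] with n hn ht0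
      have h2 : dist (γ 0) (γ (t n)) = t n := ray_dist0 hray ht0
      have h3 : dist (γ 0) (γ (t n)) ≤ dist (γ 0) (y n) + dist (y n) (γ (t n)) :=
        dist_triangle _ _ _
      linarith
    have h4 : Tendsto (fun n => t n - E) atTop atTop := by
      simpa [sub_eq_add_neg] using tendsto_atTop_add_const_right atTop (-E) htop
    exact tendsto_atTop_mono' atTop h1 h4
  refine ⟨hten, 4*E + K, ?_⟩
  intro s hs σ hσ
  filter_upwards [hE, htop.eventually_ge_atTop s, hten.eventually_ge_atTop s]
    with n h1 h2 h3
  have hs0 : 0 ≤ t n := le_trans hs h2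
  have hseg' := ray_seg hray hs0
  have hd : dist (γ 0) (γ (t n)) = t n := ray_dist0 hray hs0
  have h5 := hft (γ 0) (y n) (γ 0) (γ (t n)) (σ n) γ (hσ n) hseg' s hs h3 (by rw [hd]; exact h2)
  simp only [dist_self] at h5
  have h6 : γ s = γ s := rfl
  have h7 : dist (y n) (γ (t n)) ≤ E := h1
  calc dist (σ n s) (γ s) ≤ 4 * 0 + 4 * dist (y n) (γ (t n)) + K := h5
    _ ≤ 4*E + K := by linarith

lemma CE_unique {K : ℝ} (hgeo : GeodesicSpace X) (hft : FTprop X K)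
    {x : ℕ → X} {γ γ' : ℝ → X}
    (h : ConvergesToEnd x γ) (h' : ConvergesToEnd x γ') : AsympRays γ γ' := by
  obtain ⟨ht, C, hC⟩ := h
  obtain ⟨ht', C', hC'⟩ := h'
  obtain ⟨σ, hσ⟩ := exists_geodesic_family hgeo (γ 0) x
  obtain ⟨σ', hσ'⟩ := exists_geodesic_family hgeo (γ' 0) x
  refine ⟨C + C' + (4 * dist (γ 0) (γ' 0) + K), ?_⟩
  intro s hs
  obtain ⟨n, hn⟩ := (((hC s hs σ hσ).and (hC' s hs σ' hσ')).and
    ((ht.eventually_ge_atTop s).and (ht'.eventually_ge_atTop s))).exists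
  obtain ⟨⟨h1, h2⟩, h3, h4⟩ := hn
  have h5 := hft (γ 0) (x n) (γ' 0) (x n) (σ n) (σ' n) (hσ n) (hσ' n) s hs h3 h4
  simp only [dist_self] at h5
  have h6 : dist (γ s) (γ' s) ≤ dist (γ s) (σ n s) + dist (σ n s) (σ' n s)
      + dist (σ' n s) (γ' s) := dist_triangle4 _ _ _ _
  rw [dist_comm (γ s) (σ n s)] at h6
  linarith

lemma CE_transfer {K : ℝ} (hgeo : GeodesicSpace X) (hft : FTprop X K)
    {x : ℕ → X} {γ γ' : ℝ → X}
    (h : ConvergesToEnd x γ) (hasy : AsympRays γ γ') : ConvergesToEnd x γ' := by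
  obtain ⟨ht, C, hC⟩ := h
  obtain ⟨Ca, hCa⟩ := hasy
  obtain ⟨τ, hτ⟩ := exists_geodesic_family hgeo (γ 0) x
  have hD : dist (γ 0) (γ' 0) ≤ Ca := hCa 0 le_rfl
  have hten : Tendsto (fun n => dist (γ' 0) (x n)) atTop atTop := by
    have hev : ∀ᶠ n in atTop, dist (γ 0) (x n) - Ca ≤ dist (γ' 0) (x n) := by
      filter_upwards with n
      have := dist_triangle (γ 0) (γ' 0) (x n)
      linarith
    have hmono : Tendsto (fun n => dist (γ 0) (x n) - Ca) atTop atTop := by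
      simpa [sub_eq_add_neg] using tendsto_atTop_add_const_right atTop (-Ca) ht
    exact tendsto_atTop_mono' atTop hev hmono
  refine ⟨hten, C + (4 * Ca + K) + Ca, ?_⟩
  intro s hs σ hσ
  filter_upwards [hC s hs τ hτ, ht.eventually_ge_atTop s, hten.eventually_ge_atTop s]
    with n h1 h2 h3
  have h5 := hft (γ' 0) (x n) (γ 0) (x n) (σ n) (τ n) (hσ n) (hτ n) s hs h3 h2
  simp only [dist_self] at h5
  have h6 : dist (σ n s) (γ' s) ≤ dist (σ n s) (τ n s) + dist (τ n s) (γ s)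
      + dist (γ s) (γ' s) := dist_triangle4 _ _ _ _
  have h7 : dist (γ s) (γ' s) ≤ Ca := hCa s hs
  have h8 : dist (γ' 0) (γ 0) = dist (γ 0) (γ' 0) := dist_comm _ _
  rw [h8] at h5
  linarith

lemma CE_perturb {K : ℝ} (hgeo : GeodesicSpace X) (hft : FTprop X K)
    {x y : ℕ → X} {γ : ℝ → X}
    (h : ConvergesToEnd x γ) (R : ℝ) (hR : ∀ n, dist (x n) (y n) ≤ R) :
    ConvergesToEnd y γ := by
  obtain ⟨ht, C, hC⟩ := h
  obtain ⟨τ, hτ⟩ := exists_geodesic_family hgeo (γ 0) x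
  have hten : Tendsto (fun n => dist (γ 0) (y n)) atTop atTop := by
    have hev : ∀ᶠ n in atTop, dist (γ 0) (x n) - R ≤ dist (γ 0) (y n) := by
      filter_upwards with n
      have h1 := dist_triangle (γ 0) (y n) (x n)
      have h2 := hR n
      rw [dist_comm (y n) (x n)] at h1
      linarith
    have hmono : Tendsto (fun n => dist (γ 0) (x n) - R) atTop atTop := by
      simpa [sub_eq_add_neg] using tendsto_atTop_add_const_right atTop (-R) ht
    exact tendsto_atTop_mono' atTop hev hmono
  refine ⟨hten, (4 * R + K) + C, ?_⟩
  intro s hs σ hσ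
  filter_upwards [hC s hs τ hτ, ht.eventually_ge_atTop s, hten.eventually_ge_atTop s]
    with n h1 h2 h3
  have h5 := hft (γ 0) (y n) (γ 0) (x n) (σ n) (τ n) (hσ n) (hτ n) s hs h3 h2
  simp only [dist_self] at h5
  have h6 : dist (y n) (x n) ≤ R := by rw [dist_comm]; exact hR n
  have h7 : dist (σ n s) (γ s) ≤ dist (σ n s) (τ n s) + dist (τ n s) (γ s) :=
    dist_triangle _ _ _
  linarith

lemma CE_smul (hiso : IsometricAction G X) (g : G) {x : ℕ → X} {γ : ℝ → X}
    (h : ConvergesToEnd x γ) :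
    ConvergesToEnd (fun n => g • x n) (fun t => g • γ t) := by
  obtain ⟨ht, C, hC⟩ := h
  constructor
  · have : ∀ n, dist (g • γ 0) (g • x n) = dist (γ 0) (x n) := fun n => iso_dist hiso g _ _
    simpa [this] using ht
  refine ⟨C, ?_⟩
  intro s hs σ hσ
  have hσ' : ∀ n, IsGeodesicSegment (fun u => g⁻¹ • σ n u) 0 (dist (γ 0) (x n)) (γ 0) (x n) := by
    intro n
    have h1 := hσ n
    have h2 : dist (g • γ 0) (g • x n) = dist (γ 0) (x n) := iso_dist hiso g _ _
    rw [h2] at h1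
    have h3 := seg_smul hiso g⁻¹ h1
    simpa [inv_smul_smul] using h3
  filter_upwards [hC s hs _ hσ'] with n h1
  have h2 : dist (g⁻¹ • σ n s) (γ s) = dist (σ n s) (g • γ s) := iso_dist_inv hiso g _ _
  rw [h2] at h1
  exact h1

end CE

section GroupLems

variable {X : Type*} [MetricSpace X] {G : Type*} [Group G] [MulAction G X]

omit [MetricSpace X] in
lemma conj_pow_eq {h g : G} (n : ℕ) : (h * g * h⁻¹) ^ n = h * g ^ n * h⁻¹ := by
  induction n with
  | zero => simp
  | succ n ih => rw [pow_succ, pow_succ, ih]; group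

lemma conj_pow_smul {h g : G} (n : ℕ) (x : X) :
    h • (g ^ n • (h⁻¹ • x)) = (h * g * h⁻¹) ^ n • x := by
  rw [smul_smul, smul_smul, conj_pow_eq]

lemma inv_pow_smul_comm {h : G} (n : ℕ) (x : X) :
    h • ((h⁻¹) ^ n • x) = (h⁻¹) ^ n • (h • x) := by
  rw [smul_smul, smul_smul]
  congr 1
  group

lemma pow_smul_shift {h : G} (n : ℕ) (x : X) :
    h • (h ^ n • (h⁻¹ • x)) = h ^ n • x := by
  rw [smul_smul, smul_smul]
  congr 1
  group

/-- An isometry fixes (the class of) its attracting ray. -/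
lemma attracts_fix {K : ℝ} (hgeo : GeodesicSpace X) (hft : FTprop X K)
    (hiso : IsometricAction G X) {h : G} {γ : ℝ → X}
    (hattr : AttractsTo h γ) : AsympRays (fun t => h • γ t) γ := by
  have h1 : ConvergesToEnd (fun n => h ^ n • γ 0) γ := hattr.2 (γ 0)
  have h2 : ConvergesToEnd (fun n => h ^ n • (h⁻¹ • γ 0)) γ := hattr.2 _
  have h3 := CE_smul hiso h h2
  have h4 : (fun n => h • (h ^ n • (h⁻¹ • γ 0))) = fun n => h ^ n • γ 0 := by
    funext n
    exact pow_smul_shift n (γ 0)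
  rw [h4] at h3
  exact CE_unique hgeo hft h3 h1

/-- If `h⁻¹` attracts to `γ₂` then `h` fixes the class of `γ₂`. -/
lemma main_bwd {K : ℝ} (hgeo : GeodesicSpace X) (hft : FTprop X K)
    (hiso : IsometricAction G X) {h : G} {γ₂ : ℝ → X}
    (hat : AttractsTo h⁻¹ γ₂) : AsympRays (fun t => h • γ₂ t) γ₂ := by
  have h1 : ConvergesToEnd (fun n => (h⁻¹) ^ n • γ₂ 0) γ₂ := hat.2 (γ₂ 0)
  have h2 : ConvergesToEnd (fun n => (h⁻¹) ^ n • (h • γ₂ 0)) γ₂ := hat.2 _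
  have h3 := CE_smul hiso h h1
  have h4 : (fun n => h • ((h⁻¹) ^ n • γ₂ 0)) = fun n => (h⁻¹) ^ n • (h • γ₂ 0) := by
    funext n
    exact inv_pow_smul_comm n (γ₂ 0)
  rw [h4] at h3
  exact CE_unique hgeo hft h3 h2

lemma iter_move (hiso : IsometricAction G X) {h : G} {f : ℝ → X} {C : ℝ}
    (hC : ∀ t, 0 ≤ t → dist (h • f t) (f t) ≤ C) :
    ∀ n : ℕ, ∀ t, 0 ≤ t → dist ((h ^ n) • f t) (f t) ≤ n * C := by
  intro n
  induction n with
  | zero => intro t ht; simp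
  | succ n ih =>
    intro t ht
    have e1 : (h ^ (n+1)) • f t = (h ^ n) • (h • f t) := by
      rw [smul_smul, ← pow_succ]
    have e2 : dist ((h ^ n) • (h • f t)) ((h ^ n) • f t) = dist (h • f t) (f t) :=
      iso_dist hiso _ _ _
    calc dist ((h ^ (n+1)) • f t) (f t)
        ≤ dist ((h ^ (n+1)) • f t) ((h ^ n) • f t) + dist ((h ^ n) • f t) (f t) :=
          dist_triangle _ _ _
      _ ≤ C + n * C := by
          rw [e1, e2]
          exact add_le_add (hC t ht) (ih t ht)
      _ = ((n+1 : ℕ) : ℝ) * C := by push_cast; ring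

end GroupLems

section LinesClose

variable {X : Type*} [MetricSpace X]

/-- In a hyperbolic space, a line at finite sup-distance from another line is
uniformly `2δ`-close to it pointwise. -/
lemma lines_close {δ : ℝ} (hgeo : GeodesicSpace X) (hδ : 0 ≤ δ) (hslim : SlimTriangles X δ)
    {L' L : ℝ → X} (hL' : IsGeodesicLine L') (hL : IsGeodesicLine L)
    (B : ℝ) (hB : ∀ t : ℝ, dist (L' t) (L t) ≤ B) (t₀ : ℝ) :
    ∃ u : ℝ, dist (L' t₀) (L u) ≤ 2*δ := by
  have hB0 : (0:ℝ) ≤ B := le_trans dist_nonneg (hB 0)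
  set T := |t₀| + B + 2*δ + 1 with hT
  have hTt₀ : -T ≤ t₀ ∧ t₀ ≤ T := by
    constructor
    · have := neg_abs_le t₀; simp only [hT]; linarith
    · have := le_abs_self t₀; simp only [hT]; linarith
  have hTT : -T ≤ T := by linarith [hTt₀.1, hTt₀.2]
  set x := L' (-T) with hx
  set y := L' T with hy
  set z := L T with hz
  set w := L (-T) with hw
  have hdxy : dist x y = 2*T := by
    rw [hx, hy, line_dist hL', abs_of_nonpos (by linarith), neg_sub]
    ring
  have hdwz : dist w z = 2*T := by
    rw [hw, hz, line_dist hL, abs_of_nonpos (by linarith), neg_sub]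
    ring
  have hdyz : dist y z ≤ B := hB T
  have hdxw : dist x w ≤ B := hB (-T)
  have hγa := line_seg hL' hTT   -- x → y
  have hγe := line_seg hL hTT    -- w → z
  obtain ⟨γb, hγb⟩ := hgeo y z
  obtain ⟨γc, hγc⟩ := hgeo z x
  obtain ⟨γd, hγd⟩ := hgeo x w
  have hmem : t₀ + T ∈ Set.Icc (0:ℝ) (dist x y) := by
    rw [hdxy]
    constructor <;> linarith [hTt₀.1, hTt₀.2]
  obtain ⟨P, hP, hPd⟩ := hslim x y z (fun s => L' (s + -T)) γb γc hγa hγb hγc (t₀ + T) hmem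
  have e0 : t₀ + T + -T = t₀ := by ring
  simp only [e0] at hPd
  rcases hP with ⟨v, hv, rfl⟩ | ⟨v, hv, rfl⟩
  · -- P on side y → z, short side: contradiction
    exfalso
    have h1 : dist y (γb v) = v := seg_dist_left hγb hv.1 hv.2
    have h2 : dist (L' t₀) y ≤ δ + B := by
      calc dist (L' t₀) y ≤ dist (L' t₀) (γb v) + dist (γb v) y := dist_triangle _ _ _
      _ ≤ δ + B := by
          rw [dist_comm (γb v) y, h1]
          linarith [hv.2, hdyz]
    have h3 : dist (L' t₀) y = T - t₀ := by
      rw [hy, line_dist hL', abs_of_nonpos (by linarith [hTt₀.2])]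
      ring
    have h4 : T - t₀ ≥ B + 2*δ + 1 := by
      simp only [hT]
      have := le_abs_self t₀
      linarith [abs_nonneg t₀, neg_abs_le t₀]
    linarith
  · -- P = γc v on side z → x : second triangle z x w
    have hvIcc := hv
    obtain ⟨Q, hQ, hQd⟩ := hslim z x w γc γd (fun s => L (s + -T)) hγc hγd hγe v hv
    rcases hQ with ⟨s', hs', rfl⟩ | ⟨s', hs', rfl⟩
    · -- Q on side x → w : contradiction
      exfalso
      have h1 : dist x (γd s') = s' := seg_dist_left hγd hs'.1 hs'.2
      have h2 : dist (L' t₀) x ≤ 2*δ + B := by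
        calc dist (L' t₀) x ≤ dist (L' t₀) (γc v) + dist (γc v) (γd s') + dist (γd s') x :=
              dist_triangle4 _ _ _ _
        _ ≤ 2*δ + B := by
            rw [dist_comm (γd s') x, h1]
            linarith [hs'.2, hdxw]
      have h3 : dist (L' t₀) x = t₀ + T := by
        rw [hx, line_dist hL', abs_of_nonneg (by linarith [hTt₀.1])]
        ring
      have h4 : t₀ + T ≥ B + 2*δ + 1 := by
        simp only [hT]
        linarith [neg_abs_le t₀]
      linarith
    · -- Q = (w→z side) s' : done
      refine ⟨s' + -T, ?_⟩
      calc dist (L' t₀) (L (s' + -T)) ≤ dist (L' t₀) (γc v) + dist (γc v) (L (s' + -T)) :=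
            dist_triangle _ _ _
      _ ≤ 2*δ := by linarith

end LinesClose

section K2CAT

variable {X : Type*} [MetricSpace X] {G : Type*} [Group G] [MulAction G X]

lemma axis_pow (hiso : IsometricAction G X) {h : G} {α : ℝ → X} {k : ℝ}
    (htr : ∀ t : ℝ, h • α t = α (t + k)) :
    ∀ (n : ℕ) (t : ℝ), h ^ n • α t = α (t + n*k) := by
  intro n
  induction n with
  | zero => intro t; simp
  | succ n ih =>
    intro t
    rw [pow_succ, mul_smul, htr t, ih (t+k)]
    congr 1
    push_cast
    ring

lemma K2cat {K : ℝ} (hcat : CAT0 X) (hiso : IsometricAction G X) (hft : FTprop X K)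
    {h : G} {γ₁ γ₂ L : ℝ → X}
    (hax : IsAxial X h) (hattr : AttractsTo h γ₁)
    (hL : IsGeodesicLine L) (C₁ C₂ C₃ : ℝ)
    (hC₁ : ∀ t, 0 ≤ t → dist (L (-t)) (γ₁ t) ≤ C₁)
    (hC₂ : ∀ t, 0 ≤ t → dist (L t) (γ₂ t) ≤ C₂)
    (hC₃ : ∀ t, 0 ≤ t → dist (h • γ₂ t) (γ₂ t) ≤ C₃) :
    ∃ (ts : ℕ → ℝ) (E : ℝ), Tendsto ts atTop atTop ∧
      ∀ᶠ n in atTop, dist ((h⁻¹) ^ n • L 0) (L (ts n)) ≤ E := by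
  obtain ⟨α, hαline, k, hk, hαtr⟩ := hax
  have hpow := axis_pow hiso hαtr
  -- the axis ray attracts the orbit of α 0
  have hαray : IsGeodesicRay α := fun u hu v hv => hαline u trivial v trivial
  have horbit : (fun n : ℕ => h ^ n • α 0) = fun n : ℕ => α ((n:ℝ)*k) := by
    funext n
    rw [hpow n 0, zero_add]
  have htendk : Tendsto (fun n : ℕ => (n:ℝ)*k) atTop atTop :=
    Tendsto.atTop_mul_const hk tendsto_natCast_atTop_atTop
  have hCEα : ConvergesToEnd (fun n : ℕ => h ^ n • α 0) α := by
    rw [horbit]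
    apply CE_of_near_ray hft hαray _ (fun n : ℕ => (n:ℝ)*k) 0 htendk
    filter_upwards with n
    simp
  have hasy : AsympRays γ₁ α := CE_unique hcat.1 hft (hattr.2 (α 0)) hCEα
  obtain ⟨A₀, hA₀⟩ := hasy
  set A := C₁ + A₀ with hA
  have hAs : ∀ s, 0 ≤ s → dist (L (-s)) (α s) ≤ A := by
    intro s hs
    calc dist (L (-s)) (α s) ≤ dist (L (-s)) (γ₁ s) + dist (γ₁ s) (α s) := dist_triangle _ _ _
    _ ≤ A := add_le_add (hC₁ s hs) (hA₀ s hs)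
  have hA0 : 0 ≤ A := le_trans dist_nonneg (hAs 0 (le_rfl))
  -- iterated displacement along γ₂
  have hCn := iter_move hiso hC₃
  have key : ∀ n : ℕ, dist ((h⁻¹) ^ n • L 0) (L ((n:ℝ)*k)) ≤ 2*A := by
    intro n
    set φ : ℝ → ℝ := fun t => dist ((h ^ n) • L t) (L (t - (n:ℝ)*k)) with hφ
    have hnk : (0:ℝ) ≤ (n:ℝ)*k := by positivity
    have hLn : IsGeodesicLine (fun t => (h ^ n) • L t) := line_smul hiso _ hL
    -- bound for t ≤ 0
    have hneg : ∀ t : ℝ, t ≤ 0 → φ t ≤ 2*A := by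
      intro t ht
      have h1 : dist ((h ^ n) • L t) ((h ^ n) • α (-t)) = dist (L t) (α (-t)) :=
        iso_dist hiso _ _ _
      have h2 : (h ^ n) • α (-t) = α (-t + (n:ℝ)*k) := hpow n (-t)
      have h3 : dist (L t) (α (-t)) ≤ A := by
        have := hAs (-t) (by linarith)
        rwa [neg_neg] at this
      have h4 : dist (α (-t + (n:ℝ)*k)) (L (t - (n:ℝ)*k)) ≤ A := by
        have := hAs (-t + (n:ℝ)*k) (by linarith)
        rw [dist_comm]
        rw [show -(-t + (n:ℝ)*k) = t - (n:ℝ)*k by ring] at this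
        exact this
      calc φ t ≤ dist ((h ^ n) • L t) ((h ^ n) • α (-t))
            + dist ((h ^ n) • α (-t)) (L (t - (n:ℝ)*k)) := dist_triangle _ _ _
        _ ≤ 2*A := by
            rw [h1, h2]
            linarith
    -- bound for t ≥ 0
    have hpos : ∀ t : ℝ, 0 ≤ t → φ t ≤ 2*C₂ + (n:ℝ)*C₃ + (n:ℝ)*k := by
      intro t ht
      have h1 : dist ((h ^ n) • L t) ((h ^ n) • γ₂ t) = dist (L t) (γ₂ t) :=
        iso_dist hiso _ _ _
      have h2 : dist ((h ^ n) • γ₂ t) (γ₂ t) ≤ (n:ℝ)*C₃ := hCn n t ht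
      have h3 : dist (L t) (L (t - (n:ℝ)*k)) = (n:ℝ)*k := by
        rw [line_dist hL]
        rw [show t - (t - (n:ℝ)*k) = (n:ℝ)*k by ring, abs_of_nonneg hnk]
      calc φ t ≤ dist ((h ^ n) • L t) (L t) + dist (L t) (L (t - (n:ℝ)*k)) :=
            dist_triangle _ _ _
        _ ≤ (dist ((h ^ n) • L t) ((h ^ n) • γ₂ t) + dist ((h ^ n) • γ₂ t) (γ₂ t)
            + dist (γ₂ t) (L t)) + (n:ℝ)*k := by
            rw [h3]
            have h7 := dist_triangle4 ((h ^ n) • L t) ((h ^ n) • γ₂ t) (γ₂ t) (L t)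
            linarith
        _ ≤ 2*C₂ + (n:ℝ)*C₃ + (n:ℝ)*k := by
            rw [h1]
            have h6 := hC₂ t ht
            rw [dist_comm (γ₂ t) (L t)]
            linarith
    have hbdd : ∀ t, φ t ≤ max (2*A) (2*C₂ + (n:ℝ)*C₃ + (n:ℝ)*k) := by
      intro t
      rcases le_or_gt t 0 with ht | ht
      · exact le_trans (hneg t ht) (le_max_left _ _)
      · exact le_trans (hpos t (le_of_lt ht)) (le_max_right _ _)
    have hmc : ∀ t s : ℝ, 0 ≤ s → φ t ≤ (φ (t - s) + φ (t + s))/2 := by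
      intro t s hs
      have m1 : IsMidpt ((h ^ n) • L (t-s)) ((h ^ n) • L (t+s)) ((h ^ n) • L t) := by
        have := geo_midpt hLn (u := t-s) (v := t+s) trivial trivial trivial
        rw [show ((t-s)+(t+s))/2 = t by ring] at this
        exact this
      have m2 : IsMidpt (L (t-s-(n:ℝ)*k)) (L (t+s-(n:ℝ)*k)) (L (t-(n:ℝ)*k)) := by
        have := geo_midpt hL (u := t-s-(n:ℝ)*k) (v := t+s-(n:ℝ)*k) trivial trivial trivial
        rw [show ((t-s-(n:ℝ)*k)+(t+s-(n:ℝ)*k))/2 = t-(n:ℝ)*k by ring] at this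
        exact this
      exact midpt_contract2 hcat m1 m2
    have hdec := phi_decreasing φ _ hbdd hmc
    have hfinal : φ ((n:ℝ)*k) ≤ φ (-1) := by
      have := hdec ((n:ℝ)*k) ((n:ℝ)*k + 1) (by linarith)
      rwa [show (n:ℝ)*k - ((n:ℝ)*k + 1) = -1 by ring] at this
    have hφn : dist ((h⁻¹) ^ n • L 0) (L ((n:ℝ)*k)) = φ ((n:ℝ)*k) := by
      have e1 : φ ((n:ℝ)*k) = dist ((h ^ n) • L ((n:ℝ)*k)) (L 0) := by
        simp only [hφ]
        rw [show (n:ℝ)*k - (n:ℝ)*k = 0 by ring]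
      rw [e1, inv_pow, iso_dist_inv hiso (h^n) (L 0) (L ((n:ℝ)*k)), dist_comm]
    rw [hφn]
    exact le_trans hfinal (hneg (-1) (by norm_num))
  exact ⟨fun n => (n:ℝ)*k, 2*A, htendk, Filter.Eventually.of_forall key⟩

end K2CAT

section K2HYP

variable {X : Type*} [MetricSpace X] {G : Type*} [Group G] [MulAction G X]

lemma K2hyp {K δ : ℝ} (hgeo : GeodesicSpace X) (hδ : 0 ≤ δ) (hslim : SlimTriangles X δ)
    (hiso : IsometricAction G X) (hft : FTprop X K)
    {h : G} {γ₁ γ₂ L : ℝ → X}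
    (hqi : QIHyperbolic X h) (hattr : AttractsTo h γ₁)
    (hL : IsGeodesicLine L) (C₁ C₂ C₃ C₃' : ℝ)
    (hC₁ : ∀ t, 0 ≤ t → dist (L (-t)) (γ₁ t) ≤ C₁)
    (hC₂ : ∀ t, 0 ≤ t → dist (L t) (γ₂ t) ≤ C₂)
    (hC₃ : ∀ t, 0 ≤ t → dist (h • γ₂ t) (γ₂ t) ≤ C₃)
    (hC₃' : ∀ t, 0 ≤ t → dist (h • γ₁ t) (γ₁ t) ≤ C₃') :
    ∃ (ts : ℕ → ℝ) (E : ℝ), Tendsto ts atTop atTop ∧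
      ∀ᶠ n in atTop, dist ((h⁻¹) ^ n • L 0) (L (ts n)) ≤ E := by
  obtain ⟨x₀, a, b, ha, hb, hQI⟩ := hqi
  set p := L 0 with hp
  set R₀ := dist p x₀ with hR₀
  have hR₀0 : 0 ≤ R₀ := dist_nonneg
  have hC₁0 : 0 ≤ C₁ := le_trans dist_nonneg (hC₁ 0 le_rfl)
  have hC₂0 : 0 ≤ C₂ := le_trans dist_nonneg (hC₂ 0 le_rfl)
  have hC₃0 : 0 ≤ C₃ := le_trans dist_nonneg (hC₃ 0 le_rfl)
  have hC₃'0 : 0 ≤ C₃' := le_trans dist_nonneg (hC₃' 0 le_rfl)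
  -- orbit distance bounds
  have horb_up : ∀ m n : ℤ, dist ((h ^ m : G) • p) ((h ^ n : G) • p)
      ≤ a * |(m:ℝ) - (n:ℝ)| + b + 2*R₀ := by
    intro m n
    have h1 := (hQI m n).2
    have h2 : dist ((h ^ m : G) • p) ((h ^ m : G) • x₀) = R₀ := iso_dist hiso _ _ _
    have h3 : dist ((h ^ n : G) • x₀) ((h ^ n : G) • p) = R₀ := by
      rw [dist_comm]; exact iso_dist hiso _ _ _
    calc dist ((h ^ m : G) • p) ((h ^ n : G) • p)
        ≤ dist ((h ^ m : G) • p) ((h ^ m : G) • x₀) + dist ((h ^ m : G) • x₀) ((h ^ n : G) • x₀)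
          + dist ((h ^ n : G) • x₀) ((h ^ n : G) • p) := dist_triangle4 _ _ _ _
      _ ≤ a * |(m:ℝ) - (n:ℝ)| + b + 2*R₀ := by rw [h2, h3]; linarith
  have horb_low : ∀ m n : ℤ, a⁻¹ * |(m:ℝ) - (n:ℝ)| - b - 2*R₀
      ≤ dist ((h ^ m : G) • p) ((h ^ n : G) • p) := by
    intro m n
    have h1 := (hQI m n).1
    have h2 : dist ((h ^ m : G) • x₀) ((h ^ m : G) • p) = R₀ := by
      rw [dist_comm]; exact iso_dist hiso _ _ _
    have h3 : dist ((h ^ n : G) • p) ((h ^ n : G) • x₀) = R₀ := iso_dist hiso _ _ _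
    have h4 : dist ((h ^ m : G) • x₀) ((h ^ n : G) • x₀)
        ≤ dist ((h ^ m : G) • x₀) ((h ^ m : G) • p) + dist ((h ^ m : G) • p) ((h ^ n : G) • p)
          + dist ((h ^ n : G) • p) ((h ^ n : G) • x₀) := dist_triangle4 _ _ _ _
    rw [h2, h3] at h4
    linarith
  -- the two orbit sequences
  set q : ℕ → X := fun n => (h⁻¹) ^ n • p with hq
  set pp : ℕ → X := fun n => h ^ n • p with hpp
  have hq_eq : ∀ n : ℕ, q n = (h ^ (-(n:ℤ)) : G) • p := by
    intro n
    simp only [hq]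
    rw [zpow_neg, zpow_natCast, inv_pow]
  have hpp_eq : ∀ n : ℕ, pp n = (h ^ ((n:ℤ)) : G) • p := by
    intro n
    simp only [hpp]
    rw [zpow_natCast]
  have hp_eq : p = (h ^ ((0:ℤ)) : G) • p := by rw [zpow_zero, one_smul]
  set S₀ := a + b + 2*R₀ with hS₀
  set c₀ := b + 2*R₀ + 2*δ with hc₀
  have hqlow : ∀ n : ℕ, a⁻¹ * (n:ℝ) - b - 2*R₀ ≤ dist p (q n) := by
    intro n
    have h0 := horb_low 0 (-(n:ℤ))
    rw [← hq_eq n, ← hp_eq] at h0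
    push_cast at h0
    rw [zero_sub, neg_neg, abs_of_nonneg (by positivity : (0:ℝ) ≤ (n:ℝ))] at h0
    exact h0
  have hqstep : ∀ n : ℕ, dist (q n) (q (n+1)) ≤ S₀ := by
    intro n
    have h0 := horb_up (-(n:ℤ)) (-(((n+1):ℕ):ℤ))
    rw [← hq_eq n, ← hq_eq (n+1)] at h0
    push_cast at h0
    rw [show -(n:ℝ) - -((n:ℝ)+1) = 1 by ring, abs_one] at h0
    calc dist (q n) (q (n+1)) ≤ a * 1 + b + 2*R₀ := h0
    _ = S₀ := by rw [hS₀]; ring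
  have hppstep : ∀ n : ℕ, dist (pp n) (pp (n+1)) ≤ S₀ := by
    intro n
    have h0 := horb_up ((n:ℤ)) ((((n+1):ℕ):ℤ))
    rw [← hpp_eq n, ← hpp_eq (n+1)] at h0
    push_cast at h0
    rw [show (n:ℝ) - ((n:ℝ)+1) = -1 by ring, show |(-1:ℝ)| = 1 by norm_num] at h0
    calc dist (pp n) (pp (n+1)) ≤ a * 1 + b + 2*R₀ := h0
    _ = S₀ := by rw [hS₀]; ring
  have hpplow : ∀ n : ℕ, a⁻¹ * (n:ℝ) - b - 2*R₀ ≤ dist p (pp n) := by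
    intro n
    have h0 := horb_low 0 ((n:ℤ))
    rw [← hpp_eq n, ← hp_eq] at h0
    push_cast at h0
    rw [zero_sub, abs_neg, abs_of_nonneg (by positivity : (0:ℝ) ≤ (n:ℝ))] at h0
    exact h0
  have hppqlow : ∀ m n : ℕ, a⁻¹ * ((m:ℝ) + (n:ℝ)) - b - 2*R₀ ≤ dist (pp m) (q n) := by
    intro m n
    have h0 := horb_low ((m:ℤ)) (-(n:ℤ))
    rw [← hpp_eq m, ← hq_eq n] at h0
    push_cast at h0
    rw [show (m:ℝ) - -(n:ℝ) = (m:ℝ) + (n:ℝ) by ring,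
      abs_of_nonneg (by positivity : (0:ℝ) ≤ (m:ℝ) + (n:ℝ))] at h0
    exact h0
  -- sup bound between h^n L and L
  have hiter₂ := iter_move hiso hC₃
  have hiter₁ := iter_move hiso hC₃'
  set B : ℕ → ℝ := fun n => 2*C₁ + 2*C₂ + (n:ℝ)*(C₃+C₃') with hB
  have hBn : ∀ n : ℕ, ∀ t : ℝ, dist ((h ^ n : G) • L t) (L t) ≤ B n := by
    intro n t
    have hn3 : (0:ℝ) ≤ (n:ℝ)*C₃ := by positivity
    have hn3' : (0:ℝ) ≤ (n:ℝ)*C₃' := by positivity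
    rcases le_or_gt 0 t with ht | ht
    · have h1 : dist ((h ^ n : G) • L t) ((h ^ n : G) • γ₂ t) = dist (L t) (γ₂ t) :=
        iso_dist hiso _ _ _
      have h2 := hiter₂ n t ht
      have h3 := hC₂ t ht
      calc dist ((h ^ n : G) • L t) (L t)
          ≤ dist ((h ^ n : G) • L t) ((h ^ n : G) • γ₂ t) + dist ((h ^ n : G) • γ₂ t) (γ₂ t)
            + dist (γ₂ t) (L t) := dist_triangle4 _ _ _ _
        _ ≤ B n := by
            rw [h1, dist_comm (γ₂ t) (L t), hB]
            simp only []
            nlinarith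
    · have hmt : 0 ≤ -t := by linarith
      have h1 : dist ((h ^ n : G) • L t) ((h ^ n : G) • γ₁ (-t)) = dist (L t) (γ₁ (-t)) :=
        iso_dist hiso _ _ _
      have h2 := hiter₁ n (-t) hmt
      have h3 : dist (L t) (γ₁ (-t)) ≤ C₁ := by
        have := hC₁ (-t) hmt
        rwa [neg_neg] at this
      calc dist ((h ^ n : G) • L t) (L t)
          ≤ dist ((h ^ n : G) • L t) ((h ^ n : G) • γ₁ (-t)) + dist ((h ^ n : G) • γ₁ (-t)) (γ₁ (-t))
            + dist (γ₁ (-t)) (L t) := dist_triangle4 _ _ _ _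
        _ ≤ B n := by
            rw [h1, dist_comm (γ₁ (-t)) (L t), hB]
            simp only []
            nlinarith
  -- choose close points on L for both orbits
  have hex_u : ∀ n : ℕ, ∃ u : ℝ, dist (q n) (L u) ≤ 2*δ := by
    intro n
    have hline : IsGeodesicLine (fun t => (h⁻¹) ^ n • L t) := line_smul hiso _ hL
    have hbd : ∀ t : ℝ, dist ((h⁻¹) ^ n • L t) (L t) ≤ B n := by
      intro t
      rw [inv_pow, iso_dist_inv hiso (h ^ n) (L t) (L t), dist_comm]
      exact hBn n t
    exact lines_close hgeo hδ hslim hline hL (B n) hbd 0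
  have hex_v : ∀ n : ℕ, ∃ v : ℝ, dist (pp n) (L v) ≤ 2*δ := by
    intro n
    have hline : IsGeodesicLine (fun t => h ^ n • L t) := line_smul hiso _ hL
    exact lines_close hgeo hδ hslim hline hL (B n) (hBn n) 0
  choose u hu using hex_u
  choose v hv using hex_v
  set S := S₀ + 4*δ with hS
  have hS0 : 0 ≤ S := by
    rw [hS, hS₀]
    linarith
  have hustep : ∀ n : ℕ, |u (n+1) - u n| ≤ S := by
    intro n
    have e : |u (n+1) - u n| = dist (L (u (n+1))) (L (u n)) := (line_dist hL _ _).symm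
    rw [e]
    calc dist (L (u (n+1))) (L (u n))
        ≤ dist (L (u (n+1))) (q (n+1)) + dist (q (n+1)) (q n) + dist (q n) (L (u n)) :=
          dist_triangle4 _ _ _ _
      _ ≤ S := by
          rw [dist_comm (L (u (n+1))) (q (n+1)), dist_comm (q (n+1)) (q n), hS]
          linarith [hu (n+1), hu n, hqstep n]
  have hvstep : ∀ n : ℕ, |v (n+1) - v n| ≤ S := by
    intro n
    have e : |v (n+1) - v n| = dist (L (v (n+1))) (L (v n)) := (line_dist hL _ _).symm
    rw [e]
    calc dist (L (v (n+1))) (L (v n))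
        ≤ dist (L (v (n+1))) (pp (n+1)) + dist (pp (n+1)) (pp n) + dist (pp n) (L (v n)) :=
          dist_triangle4 _ _ _ _
      _ ≤ S := by
          rw [dist_comm (L (v (n+1))) (pp (n+1)), dist_comm (pp (n+1)) (pp n), hS]
          linarith [hv (n+1), hv n, hppstep n]
  have habs_u : ∀ n : ℕ, a⁻¹ * (n:ℝ) - c₀ ≤ |u n| := by
    intro n
    have e : |u n| = dist p (L (u n)) := by
      rw [hp, line_dist hL, abs_sub_comm, sub_zero]
    rw [e]
    have h1 := dist_triangle p (L (u n)) (q n)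
    have h1' := dist_triangle p (q n) (L (u n))
    have h2 := hqlow n
    have h3 := hu n
    have h4 : dist (L (u n)) (q n) = dist (q n) (L (u n)) := dist_comm _ _
    rw [hc₀]
    linarith [dist_triangle p (q n) (L (u n)), dist_triangle p (L (u n)) (q n)]
  have habs_v : ∀ n : ℕ, a⁻¹ * (n:ℝ) - c₀ ≤ |v n| := by
    intro n
    have e : |v n| = dist p (L (v n)) := by
      rw [hp, line_dist hL, abs_sub_comm, sub_zero]
    rw [e]
    have h1 := dist_triangle p (L (v n)) (pp n)
    have h2 := hpplow n
    have h3 := hv n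
    have h4 : dist (L (v n)) (pp n) = dist (pp n) (L (v n)) := dist_comm _ _
    rw [hc₀]
    linarith [dist_triangle p (pp n) (L (v n)), dist_triangle p (L (v n)) (pp n)]
  -- threshold
  have hNgen : ∀ D : ℝ, ∃ N : ℕ, ∀ n : ℕ, N ≤ n → D < a⁻¹ * (n:ℝ) - c₀ := by
    intro D
    obtain ⟨N, hN⟩ := exists_nat_gt (a * (D + c₀) + 1)
    refine ⟨N, fun n hn => ?_⟩
    have h1 : (N:ℝ) ≤ (n:ℝ) := Nat.cast_le.mpr hn
    have h2 : a * (D + c₀) + 1 < (n:ℝ) := by linarith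
    have h3 : a⁻¹ * (a * (D + c₀) + 1) < a⁻¹ * (n:ℝ) :=
      mul_lt_mul_of_pos_left h2 (by positivity)
    have h4 : a⁻¹ * (a * (D + c₀) + 1) = D + c₀ + a⁻¹ := by
      field_simp
    nlinarith [inv_pos.mpr ha]
  obtain ⟨Nu, hNu⟩ := hNgen S
  obtain ⟨Nv, hNv⟩ := hNgen S
  have hbigu : ∀ n : ℕ, Nu ≤ n → S < |u n| := fun n hn =>
    lt_of_lt_of_le (hNu n hn) (habs_u n)
  have hbigv : ∀ n : ℕ, Nv ≤ n → S < |v n| := fun n hn =>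
    lt_of_lt_of_le (hNv n hn) (habs_v n)
  have hlin : Tendsto (fun n : ℕ => a⁻¹ * (n:ℝ) - c₀) atTop atTop := by
    have h1 : Tendsto (fun n : ℕ => a⁻¹ * (n:ℝ)) atTop atTop :=
      Tendsto.const_mul_atTop (by positivity) tendsto_natCast_atTop_atTop
    simpa [sub_eq_add_neg] using tendsto_atTop_add_const_right atTop (-c₀) h1
  -- forward orbit: rule out positive drift
  have hnegv : ∀ n : ℕ, Nv ≤ n → v n < 0 := by
    rcases sign_stabilize v S Nv hvstep hbigv with hposv | hnegv
    · exfalso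
      have htendv : Tendsto v atTop atTop := by
        apply tendsto_atTop_mono' atTop ?_ hlin
        filter_upwards [Filter.eventually_ge_atTop Nv] with n hn
        have := habs_v n
        rw [abs_of_pos (hposv n hn)] at this
        exact this
      have hCE_L : ConvergesToEnd pp (fun t => L t) := by
        apply CE_of_near_ray hft (line_ray hL) pp v (2*δ) htendv
        filter_upwards with n
        exact hv n
      have hCE1 : ConvergesToEnd pp γ₁ := hattr.2 p
      obtain ⟨C₄, hC₄⟩ := CE_unique hgeo hft hCE_L hCE1
      have hC₄0 : 0 ≤ C₄ := le_trans dist_nonneg (hC₄ 0 le_rfl)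
      set t₁ := (C₁ + C₄)/2 + 1 with ht₁
      have ht₁0 : 0 ≤ t₁ := by rw [ht₁]; linarith
      have h1 : dist (L t₁) (L (-t₁)) = 2*t₁ := by
        rw [line_dist hL, abs_of_nonneg (by linarith)]
        ring
      have h2 : dist (L t₁) (γ₁ t₁) ≤ C₄ := hC₄ t₁ ht₁0
      have h3 : dist (γ₁ t₁) (L (-t₁)) ≤ C₁ := by
        rw [dist_comm]
        exact hC₁ t₁ ht₁0
      have h4 := dist_triangle (L t₁) (γ₁ t₁) (L (-t₁))
      rw [h1] at h4
      rw [ht₁] at h4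
      linarith
    · exact hnegv
  -- hence the forward orbit tracks γ₁
  set c₇ := 2*δ + C₁ with hc₇
  have hc₇0 : 0 ≤ c₇ := by rw [hc₇]; linarith
  set r : ℕ → ℝ := fun n => -(v n) with hr
  have hrpos : ∀ n : ℕ, Nv ≤ n → 0 < r n := by
    intro n hn
    simp only [hr]
    linarith [hnegv n hn]
  have hrtrack : ∀ n : ℕ, Nv ≤ n → dist (pp n) (γ₁ (r n)) ≤ c₇ := by
    intro n hn
    have h1 : L (v n) = L (-(r n)) := by simp [hr]
    have h2 : dist (L (-(r n))) (γ₁ (r n)) ≤ C₁ := hC₁ (r n) (le_of_lt (hrpos n hn))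
    calc dist (pp n) (γ₁ (r n)) ≤ dist (pp n) (L (v n)) + dist (L (v n)) (γ₁ (r n)) :=
          dist_triangle _ _ _
    _ ≤ c₇ := by
        have hv' : dist (pp n) (L (v n)) ≤ 2*δ := hv n
        rw [h1] at hv'
        rw [h1, hc₇]
        linarith [hv']
  have hrlow : ∀ n : ℕ, Nv ≤ n → a⁻¹ * (n:ℝ) - c₀ ≤ r n := by
    intro n hn
    have := habs_v n
    rw [abs_of_neg (hnegv n hn)] at this
    simpa [hr] using this
  have hrstep : ∀ n : ℕ, |r (n+1) - r n| ≤ S := by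
    intro n
    have : |r (n+1) - r n| = |v (n+1) - v n| := by
      simp only [hr]
      rw [show -(v (n+1)) - -(v n) = -(v (n+1) - v n) by ring, abs_neg]
    rw [this]
    exact hvstep n
  -- backward orbit: rule out negative drift
  have hposu : ∀ n : ℕ, Nu ≤ n → 0 < u n := by
    rcases sign_stabilize u S Nu hustep hbigu with hposu | hnegu
    · exact hposu
    · exfalso
      set s : ℕ → ℝ := fun n => -(u n) with hs'
      have hspos : ∀ n : ℕ, Nu ≤ n → 0 < s n := by
        intro n hn
        simp only [hs']
        linarith [hnegu n hn]
      have hstrack : ∀ n : ℕ, Nu ≤ n → dist (q n) (γ₁ (s n)) ≤ c₇ := by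
        intro n hn
        have h1 : L (u n) = L (-(s n)) := by simp [hs']
        have h2 : dist (L (-(s n))) (γ₁ (s n)) ≤ C₁ := hC₁ (s n) (le_of_lt (hspos n hn))
        calc dist (q n) (γ₁ (s n)) ≤ dist (q n) (L (u n)) + dist (L (u n)) (γ₁ (s n)) :=
              dist_triangle _ _ _
        _ ≤ c₇ := by
            have hu' : dist (q n) (L (u n)) ≤ 2*δ := hu n
            rw [h1] at hu'
            rw [h1, hc₇]
            linarith [hu']
      have hslow : ∀ n : ℕ, Nu ≤ n → a⁻¹ * (n:ℝ) - c₀ ≤ s n := by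
        intro n hn
        have := habs_u n
        rw [abs_of_neg (hnegu n hn)] at this
        simpa [hs'] using this
      -- choose a large index n⋆
      obtain ⟨N₁, hN₁⟩ := hNgen (r Nv)
      obtain ⟨N₂, hN₂⟩ := hNgen (2*c₇ + S + 2*δ + b + 2*R₀)
      set nstar := max Nu (max N₁ N₂) with hnstar
      have hn1 : Nu ≤ nstar := le_max_left _ _
      have hn2 : N₁ ≤ nstar := le_trans (le_max_left _ _) (le_max_right _ _)
      have hn3 : N₂ ≤ nstar := le_trans (le_max_right _ _) (le_max_right _ _)
      have hs_big : r Nv ≤ s nstar :=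
        le_trans (le_of_lt (hN₁ nstar hn2)) (hslow nstar hn1)
      have hs_big2 : 2*c₇ + S + 2*δ + b + 2*R₀ < a⁻¹ * (nstar:ℝ) - c₀ := hN₂ nstar hn3
      -- find m with r m close to s nstar
      have hi : ∃ m : ℕ, Nv ≤ m ∧ s nstar ≤ r m := by
        obtain ⟨N₃, hN₃⟩ := hNgen (s nstar)
        refine ⟨max Nv N₃, le_max_left _ _, ?_⟩
        exact le_trans (le_of_lt (hN₃ _ (le_max_right _ _)))
          (hrlow _ (le_max_left _ _))
      obtain ⟨m, hmNv, hm⟩ := reach_lemma r S hS0 Nv (s nstar) hrstep hs_big hi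
      -- distance estimates
      have hd1 : dist (pp m) (q nstar) ≤ 2*c₇ + S := by
        have h1 := hrtrack m hmNv
        have h2 : dist (γ₁ (r m)) (γ₁ (s nstar)) = |r m - s nstar| :=
          ray_dist hattr.1 (le_of_lt (hrpos m hmNv)) (le_of_lt (hspos nstar hn1))
        have h3 : dist (γ₁ (s nstar)) (q nstar) ≤ c₇ := by
          rw [dist_comm]
          exact hstrack nstar hn1
        calc dist (pp m) (q nstar)
            ≤ dist (pp m) (γ₁ (r m)) + dist (γ₁ (r m)) (γ₁ (s nstar))
              + dist (γ₁ (s nstar)) (q nstar) := dist_triangle4 _ _ _ _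
          _ ≤ 2*c₇ + S := by
              rw [h2]
              linarith [hm]
      have hd2 : a⁻¹ * ((m:ℝ) + (nstar:ℝ)) - b - 2*R₀ ≤ dist (pp m) (q nstar) :=
        hppqlow m nstar
      have hd3 : a⁻¹ * (nstar:ℝ) ≤ a⁻¹ * ((m:ℝ) + (nstar:ℝ)) := by
        apply mul_le_mul_of_nonneg_left _ (by positivity)
        have : (0:ℝ) ≤ (m:ℝ) := Nat.cast_nonneg m
        linarith
      rw [hc₀] at hs_big2
      linarith
  -- conclusion
  have htendu : Tendsto u atTop atTop := by
    apply tendsto_atTop_mono' atTop ?_ hlin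
    filter_upwards [Filter.eventually_ge_atTop Nu] with n hn
    have := habs_u n
    rw [abs_of_pos (hposu n hn)] at this
    exact this
  exact ⟨u, 2*δ, htendu, Filter.Eventually.of_forall hu⟩

end K2HYP

section Main

variable {X : Type*} [MetricSpace X] {G : Type*} [Group G] [MulAction G X]

lemma mem_endStabilizer (hiso : IsometricAction G X) (γ : ℝ → X) (g : G) :
    g ∈ endStabilizer hiso γ ↔ AsympRays (fun t => g • γ t) γ := Iff.rfl

/-- The forward (hard) direction: a hyperbolic isometry attracting to `γ₁` that fixes
the class of `γ₂`, opposite `γ₁`, has `γ₂` as repelling point. -/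
lemma main_fwd (hNPC : NPCSpace X) (hiso : IsometricAction G X)
    {h : G} (hhyph : IsHyperbolicIsom X h)
    {γ₁ γ₂ : ℝ → X} (hattr : AttractsTo h γ₁) (hray₂ : IsGeodesicRay γ₂)
    (hopp : OppositeEnds γ₁ γ₂) (hfix : AsympRays (fun t => h • γ₂ t) γ₂) :
    AttractsTo h⁻¹ γ₂ := by
  obtain ⟨K, hK, hft⟩ := ft_of_NPC hNPC
  have hgeo := hNPC.1
  obtain ⟨L, hL, hC₁', hC₂'⟩ := hopp
  obtain ⟨C₁, hC₁⟩ := hC₁'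
  obtain ⟨C₂, hC₂⟩ := hC₂'
  obtain ⟨C₃, hC₃⟩ := hfix
  have hK2 : ∃ (ts : ℕ → ℝ) (E : ℝ), Tendsto ts atTop atTop ∧
      ∀ᶠ n in atTop, dist ((h⁻¹) ^ n • L 0) (L (ts n)) ≤ E := by
    rcases hhyph with ⟨_, hcat, hax⟩ | ⟨_, ⟨δ, hδ, hslim⟩, hqi⟩
    · exact K2cat hcat hiso hft hax hattr hL C₁ C₂ C₃ hC₁ hC₂ hC₃
    · obtain ⟨C₃', hC₃'⟩ := attracts_fix hgeo hft hiso hattr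
      exact K2hyp hgeo hδ hslim hiso hft hqi hattr hL C₁ C₂ C₃ C₃' hC₁ hC₂ hC₃ hC₃'
  obtain ⟨ts, E, htop, hE⟩ := hK2
  have hCEL : ConvergesToEnd (fun n => (h⁻¹) ^ n • L 0) (fun t => L t) :=
    CE_of_near_ray hft (line_ray hL) _ ts E htop hE
  have hCEγ₂ : ConvergesToEnd (fun n => (h⁻¹) ^ n • L 0) γ₂ :=
    CE_transfer hgeo hft hCEL ⟨C₂, hC₂⟩
  refine ⟨hray₂, fun x => ?_⟩
  apply CE_perturb hgeo hft hCEγ₂ (dist (L 0) x)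
  intro n
  exact (iso_dist hiso ((h⁻¹) ^ n) (L 0) x).le

lemma hyp_conj (hiso : IsometricAction G X) {g : G} (hg : IsHyperbolicIsom X g) (h : G) :
    IsHyperbolicIsom X (h * g * h⁻¹) := by
  rcases hg with ⟨hc, hcat, α, hαline, k, hk, htr⟩ | ⟨hp, hδ, x, a, b, ha, hb, hQI⟩
  · left
    refine ⟨hc, hcat, fun t => h • α t, line_smul hiso h hαline, k, hk, ?_⟩
    intro t
    have e1 : h * g * h⁻¹ * h = h * g := by group
    rw [smul_smul, e1, mul_smul, htr]
  · right
    refine ⟨hp, hδ, h • x, a, b, ha, hb, ?_⟩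
    intro m n
    have e : ∀ z : ℤ, (h * g * h⁻¹) ^ z • (h • x) = h • (g ^ z • x) := by
      intro z
      have e1 : (h * g * h⁻¹) ^ z = h * g ^ z * h⁻¹ := by
        have := map_zpow (MulAut.conj h) g z
        simpa [MulAut.conj_apply] using this
      rw [e1, mul_smul, mul_smul, inv_smul_smul]
    rw [e m, e n, iso_dist hiso h]
    exact hQI m n

end Main


/-- Let `g` be a hyperbolic isometry with attracting point `ξ₁` (the
boundary point of `γ₁`) and let `ξ₂` (the boundary point of `γ₂`) be opposite `ξ₁`.
Then `g` stabilizes `ξ₂` iff `ξ₂ = ξ₋(g)`. Consequently, every hyperbolic element of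
`G` with attracting point `ξ₁` has repelling point `ξ₂` iff `G_{ξ₁} ≤ G_{ξ₂}`. -/
theorem fixed_opposite_point_iff_repelling
    {X G : Type*} [MetricSpace X] [Group G] [MulAction G X]
    (hNPC : NPCSpace X) (hiso : IsometricAction G X)
    (g : G) (hhyp : IsHyperbolicIsom X g)
    (γ₁ γ₂ : ℝ → X) (hattr : AttractsTo g γ₁)
    (hray₂ : IsGeodesicRay γ₂) (hopp : OppositeEnds γ₁ γ₂) :
    (AsympRays (fun t => g • γ₂ t) γ₂ ↔ AttractsTo g⁻¹ γ₂) ∧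
    ((∀ h : G, IsHyperbolicIsom X h → AttractsTo h γ₁ → AttractsTo h⁻¹ γ₂) ↔
      endStabilizer hiso γ₁ ≤ endStabilizer hiso γ₂) := by
  obtain ⟨K, hK, hft⟩ := ft_of_NPC hNPC
  have hgeo := hNPC.1
  refine ⟨⟨?_, ?_⟩, ⟨?_, ?_⟩⟩
  · intro hfix
    exact main_fwd hNPC hiso hhyp hattr hray₂ hopp hfix
  · intro hat
    exact main_bwd hgeo hft hiso hat
  · intro hall
    refine fun h hh => ?_
    have hfix₁ : AsympRays (fun t => h • γ₁ t) γ₁ := hh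
    have hg' : IsHyperbolicIsom X (h * g * h⁻¹) := hyp_conj hiso hhyp h
    have hattr' : AttractsTo (h * g * h⁻¹) γ₁ := by
      refine ⟨hattr.1, fun x => ?_⟩
      have h1 : ConvergesToEnd (fun n => g ^ n • (h⁻¹ • x)) γ₁ := hattr.2 _
      have h2 := CE_smul hiso h h1
      have h3 : (fun n => h • (g ^ n • (h⁻¹ • x))) = fun n => (h * g * h⁻¹) ^ n • x := by
        funext n
        exact conj_pow_smul n x
      rw [h3] at h2
      exact CE_transfer hgeo hft h2 hfix₁
    have hA : AttractsTo (h * g * h⁻¹)⁻¹ γ₂ := hall _ hg' hattr'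
    have hAg : AttractsTo g⁻¹ γ₂ := hall g hhyp hattr
    have h4 : ConvergesToEnd (fun n => ((h * g * h⁻¹)⁻¹) ^ n • (h • γ₂ 0)) γ₂ := hA.2 _
    have h5 : ConvergesToEnd (fun n => (g⁻¹) ^ n • (γ₂ 0)) γ₂ := hAg.2 _
    have h6 := CE_smul hiso h h5
    have h7 : (fun n => h • ((g⁻¹) ^ n • γ₂ 0)) = fun n => ((h * g * h⁻¹)⁻¹) ^ n • (h • γ₂ 0) := by
      funext n
      have e1 : (h * g * h⁻¹)⁻¹ = h * g⁻¹ * h⁻¹ := by group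
      rw [e1, ← conj_pow_smul n (h • γ₂ 0)]
      rw [inv_smul_smul]
    rw [h7] at h6
    exact CE_unique hgeo hft h6 h4
  · intro hsub h hh hattrh
    have hfix₁ : h ∈ endStabilizer hiso γ₁ := attracts_fix hgeo hft hiso hattrh
    have hfix₂ : AsympRays (fun t => h • γ₂ t) γ₂ := hsub hfix₁
    exact main_fwd hNPC hiso hh hattrh hray₂ hopp hfix₂
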